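/- arXiv:0909.1424 — 3 statements merged into one kernel-verified Lean document; each statement's English description precedes it below -/
import Mathlib

section
/- Let {π1,π2} be a pair of negative skew-symmetric lexicographic arrays of degree 2t, and let (P^(0),Q^(0)),(P^(1),Q^(1)),…,(P^(t),Q^(t)) be the sequence of notched bitableaux produced by the OBRSK algorithm applied to {π1,π2}. Then for every i ∈ {1,…,t}, the notched tableau P^(i) is row strict. -/
namespace OBRSKPaper

/-! ### Pairs of two-row arrays -/

/-- A pair of two-row arrays of positive integers: `π1` has top row `b` and bottom row `a`;
`π2` has top row `c` and bottom row `d`.  Columns are listed from left to right. -/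
structure ArrayPair where
  a : List ℕ
  b : List ℕ
  c : List ℕ
  d : List ℕ

/-- The duality property for a list of (entry, dual entry) pairs: if `x ≤ y` then
`dual x ≥ dual y`, if `x < y` then `dual x > dual y`, and if `x = y` then `dual x = dual y`. -/
def DualityProp (l : List (ℕ × ℕ)) : Prop :=
  ∀ p ∈ l, ∀ q ∈ l,
    (p.1 ≤ q.1 → q.2 ≤ p.2) ∧ (p.1 < q.1 → q.2 < p.2) ∧ (p.1 = q.1 → p.2 = q.2)

/-- The two-row array with top row `top` and bottom row `bot` is lexicographic:
the top row weakly decreases, and bottom-row entries weakly decrease below equal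
top-row entries. -/
def LexTwoRow (top bot : List ℕ) : Prop :=
  ∀ k, k + 1 < top.length →
    top.getD (k+1) 0 ≤ top.getD k 0 ∧
    (top.getD (k+1) 0 = top.getD k 0 → bot.getD (k+1) 0 ≤ bot.getD k 0)

namespace ArrayPair

/-- The number of columns of each array of the pair. -/
def t (π : ArrayPair) : ℕ := π.b.length

/-- The degree of a pair of arrays: twice the number of columns. -/
def degree (π : ArrayPair) : ℕ := 2 * π.t

def eqLen (π : ArrayPair) : Prop :=
  π.a.length = π.t ∧ π.c.length = π.t ∧ π.d.length = π.t

/-- The list of (entry, dual entry) pairs of a pair of arrays: the dual of `a i` is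
`c (t+1-i)`, of `b i` is `d (t+1-i)`, of `c i` is `a (t+1-i)`, of `d i` is `b (t+1-i)`. -/
def entryDual (π : ArrayPair) : List (ℕ × ℕ) :=
  π.a.zip π.c.reverse ++ π.b.zip π.d.reverse ++ π.c.zip π.a.reverse ++ π.d.zip π.b.reverse

/-- `{π1, π2}` is a pair of skew-symmetric lexicographic arrays. -/
def SkewSymmLex (π : ArrayPair) : Prop :=
  π.eqLen ∧
  (∀ x ∈ π.a ++ π.b ++ π.c ++ π.d, 0 < x) ∧
  LexTwoRow π.b π.a ∧
  LexTwoRow π.d π.c ∧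
  (∀ p ∈ π.a.zip π.d.reverse, p.1 < p.2) ∧
  (∀ p ∈ π.b.zip π.c.reverse, p.1 < p.2) ∧
  DualityProp π.entryDual ∧
  (∀ i < π.t,
    (π.a.getD i 0 < π.b.getD i 0 → π.d.getD (π.t - 1 - i) 0 < π.c.getD (π.t - 1 - i) 0) ∧
    (π.b.getD i 0 < π.a.getD i 0 → π.c.getD (π.t - 1 - i) 0 < π.d.getD (π.t - 1 - i) 0))

def Negative (π : ArrayPair) : Prop := ∀ p ∈ π.a.zip π.b, p.1 < p.2

def Positive (π : ArrayPair) : Prop := ∀ p ∈ π.a.zip π.b, p.2 < p.1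

def Nonvanishing (π : ArrayPair) : Prop := ∀ p ∈ π.a.zip π.b, p.1 ≠ p.2

/-- The negative part of a pair: the columns of `π1` with `a i < b i`, together with
their dual columns of `π2` (those with `d j < c j`). -/
def negPart (π : ArrayPair) : ArrayPair where
  a := ((π.a.zip π.b).filter (fun p => decide (p.1 < p.2))).map Prod.fst
  b := ((π.a.zip π.b).filter (fun p => decide (p.1 < p.2))).map Prod.snd
  c := ((π.c.zip π.d).filter (fun p => decide (p.2 < p.1))).map Prod.fst
  d := ((π.c.zip π.d).filter (fun p => decide (p.2 < p.1))).map Prod.snd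

/-- The positive part of a pair: the columns of `π1` with `a i > b i`, together with
their dual columns of `π2`. -/
def posPart (π : ArrayPair) : ArrayPair where
  a := ((π.a.zip π.b).filter (fun p => decide (p.2 < p.1))).map Prod.fst
  b := ((π.a.zip π.b).filter (fun p => decide (p.2 < p.1))).map Prod.snd
  c := ((π.c.zip π.d).filter (fun p => decide (p.1 < p.2))).map Prod.fst
  d := ((π.c.zip π.d).filter (fun p => decide (p.1 < p.2))).map Prod.snd

/-- The bijection ψ from pairs of arrays to pairs of multisets on ℕ²:
`{(b/a),(c/d)} ↦ ({(a i, b i)}, {(d i, c i)})`. -/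
def toMS (π : ArrayPair) : Multiset (ℕ × ℕ) × Multiset (ℕ × ℕ) :=
  (↑(π.a.zip π.b), ↑(π.d.zip π.c))

/-- The pair corresponding to `{U1^(k), U2^(k)}` : the first `k` columns of `π1`
together with the last `k` columns of `π2`. -/
def prefixPair (π : ArrayPair) (k : ℕ) : ArrayPair :=
  ⟨π.a.take k, π.b.take k, π.c.drop (π.t - k), π.d.drop (π.t - k)⟩

end ArrayPair

/-- Comparison placing columns in decreasing lexicographic order. -/
def lexSortKey : ℕ × ℕ → ℕ × ℕ → Bool := fun x y =>
  decide (y.1 < x.1 ∨ (x.1 = y.1 ∧ y.2 ≤ x.2))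

/-- The involution `L` : `L {π1, π2} := {l(π1), lᵗ(π2)}`, where `l` switches the two rows
and rearranges columns so that the result is lexicographic, and `lᵗ` switches the two rows
and rearranges columns so that the transpose of the result is lexicographic. -/
def Lmap (π : ArrayPair) : ArrayPair :=
  let s1 := (π.a.zip π.b).mergeSort lexSortKey
  let s2 := (π.c.zip π.d).mergeSort lexSortKey
  ⟨s1.map Prod.snd, s1.map Prod.fst, s2.map Prod.snd, s2.map Prod.fst⟩

/-! ### Notched bitableaux -/

/-- A notched bitableau: a pair of fillings (lists of rows, top to bottom). -/
structure Bitab where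
  P : List (List ℕ)
  Q : List (List ℕ)

/-- Count, as an integer, of entries of the list that are `≤ z`. -/
def cntLE (l : List ℕ) (z : ℕ) : ℤ := ((l.filter (fun x => decide (x ≤ z))).length : ℤ)

/-- `diffLE A B A' B'` expresses `A − B ≤ A' − B'` for the multisets
`A − B := A ∪̇ (ℕ∖B)`: for every `z`, the number of elements `≤ z` of `A − B` is at least
the number of elements `≤ z` of `A' − B'`. -/
def diffLE (A B A' B' : List ℕ) : Prop :=
  ∀ z : ℕ, cntLE A' z - cntLE B' z ≤ cntLE A z - cntLE B z

/-- `diffLT A B A' B'` expresses `A − B < A' − B'`. -/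
def diffLT (A B A' B' : List ℕ) : Prop := diffLE A B A' B' ∧ ¬ diffLE A' B' A B

namespace Bitab

/-- The degree: total number of boxes of `P`. -/
def degree (B : Bitab) : ℕ := (B.P.map List.length).sum

def SameShape (B : Bitab) : Prop := B.P.map List.length = B.Q.map List.length

def RowStrict (B : Bitab) : Prop :=
  (∀ r ∈ B.P, r.Pairwise (· < ·)) ∧ (∀ r ∈ B.Q, r.Pairwise (· < ·))

def EntriesPos (B : Bitab) : Prop :=
  (∀ r ∈ B.P, ∀ x ∈ r, 0 < x) ∧ (∀ r ∈ B.Q, ∀ x ∈ r, 0 < x)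

def Semistandard (B : Bitab) : Prop :=
  B.SameShape ∧ B.RowStrict ∧ B.EntriesPos ∧
  ∀ i, i + 1 < B.P.length →
    diffLE (B.P.getD i []) (B.Q.getD i []) (B.P.getD (i+1) []) (B.Q.getD (i+1) [])

/-- Negative: semistandard and the last row satisfies `P_r − Q_r < ∅`. -/
def Negative (B : Bitab) : Prop :=
  B.Semistandard ∧ ∀ i, B.P.length = i + 1 → diffLT (B.P.getD i []) (B.Q.getD i []) [] []

/-- Positive: semistandard and the first row satisfies `∅ < P_1 − Q_1`. -/
def Positive (B : Bitab) : Prop :=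
  B.Semistandard ∧ (B.P ≠ [] → diffLT [] [] (B.P.getD 0 []) (B.Q.getD 0 []))

/-- Nonvanishing: semistandard and every row is negative or positive. -/
def Nonvanishing (B : Bitab) : Prop :=
  B.Semistandard ∧ ∀ i < B.P.length,
    diffLT (B.P.getD i []) (B.Q.getD i []) [] [] ∨ diffLT [] [] (B.P.getD i []) (B.Q.getD i [])

/-- The list of (entry, dual entry) pairs of a notched bitableau: the dual of the entry in
position `(i,j)` of `P` is the entry in position `(i, k_i+1−j)` of `Q` and vice versa. -/
def entryDual (B : Bitab) : List (ℕ × ℕ) :=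
  ((B.P.zip B.Q).map (fun pq => pq.1.zip pq.2.reverse)).flatten ++
  ((B.P.zip B.Q).map (fun pq => pq.2.zip pq.1.reverse)).flatten

/-- A skew-symmetric notched bitableau: semistandard, of even size, satisfying the
duality property. -/
def SkewSymm (B : Bitab) : Prop :=
  B.Semistandard ∧ (∀ r ∈ B.P, Even r.length) ∧ DualityProp B.entryDual

end Bitab

/-- The involution ι : reverse the order of the rows of `(Q, P)`. -/
def iota (B : Bitab) : Bitab := ⟨B.Q.reverse, B.P.reverse⟩

/-! ### The OBRSK algorithm -/

/-- Insert `x` into the list `l` at (0-based) position `i`, shifting later entries right. -/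
def insertAt (l : List ℕ) (i : ℕ) (x : ℕ) : List ℕ := l.take i ++ x :: l.drop i

/-- One row of bounded insertion: `x` bumps the smallest entry of the row that is `≥ x`
and `< b`; if there is no such entry, `x` is placed in a new box at the right end of the
entries `< b`.  Returns the new row, the bumped entry (if any), and the 1-indexed forward
position of the new/overwritten box. -/
def insertRowP (b x : ℕ) (row : List ℕ) : List ℕ × Option ℕ × ℕ :=
  match row.findIdx? (fun y => decide (x ≤ y ∧ y < b)) with
  | some j => (row.set j x, some (row.getD j 0), j + 1)
  | none =>
      let j := (row.takeWhile (fun y => decide (y < b))).length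
      (insertAt row j x, none, j + 1)

/-- Bounded insertion of `x` into the rows of `P`, bounded by `b`.  Returns the new rows
and the list of 1-indexed forward positions of the bumped/new boxes, row by row. -/
def insertP (b : ℕ) : List (List ℕ) → ℕ → List (List ℕ) × List ℕ
  | [], x => ([[x]], [1])
  | row :: rest, x =>
      match insertRowP b x row with
      | (row', none, j) => (row' :: rest, [j])
      | (row', some y, j) =>
          let (rest', js) := insertP b rest y
          (row' :: rest', j :: js)

/-- Dual insertion of `x` into the rows of `Q`, at the backward positions recorded in `js`:
in each intermediate row the backward `j`-th entry is bumped, and in the final row the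
incoming value is placed in a new box at the backward `j`-th position. -/
def insertQ : List (List ℕ) → List ℕ → ℕ → List (List ℕ)
  | rows, [], _ => rows
  | [], _ :: _, x => [[x]]
  | row :: rest, [j], x => insertAt row (row.length + 1 - j) x :: rest
  | row :: rest, j :: js, x =>
      row.set (row.length - j) x :: insertQ rest js (row.getD (row.length - j) 0)

/-- Modify the `k`-th (0-based) row of a list of rows. -/
def modifyRow (rows : List (List ℕ)) (k : ℕ) (f : List ℕ → List ℕ) : List (List ℕ) :=
  rows.take k ++ (match rows.drop k with
    | [] => []
    | r :: rest => f r :: rest)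

/-- One step of the OBRSK algorithm, applied with the quadruple
`(a_{i+1}, b_{i+1}, c_{t−i}, d_{t−i})`. -/
def obrskStep (PQ : List (List ℕ) × List (List ℕ)) (q : ℕ × ℕ × ℕ × ℕ) :
    List (List ℕ) × List (List ℕ) :=
  let (x, b, c, d) := q
  let Pjs := insertP b PQ.1 x
  let K := Pjs.2.length
  let Q' := insertQ PQ.2 Pjs.2 c
  (modifyRow Pjs.1 (K - 1) (fun r => r ++ [d]), modifyRow Q' (K - 1) (fun r => b :: r))

/-- The list of quadruples `(a_{i+1}, b_{i+1}, c_{t−i}, d_{t−i})`, `i = 0, …, t−1`. -/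
def ArrayPair.quads (π : ArrayPair) : List (ℕ × ℕ × ℕ × ℕ) :=
  π.a.zip (π.b.zip (π.c.reverse.zip π.d.reverse))

/-- The notched bitableau `(P^(i), Q^(i))` produced after `i` steps of the OBRSK algorithm. -/
def stepState (π : ArrayPair) (i : ℕ) : List (List ℕ) × List (List ℕ) :=
  (π.quads.take i).foldl obrskStep ([], [])

/-- The OBRSK correspondence on pairs of negative skew-symmetric lexicographic arrays:
`OBRSK {π1, π2} := (P^(t), Q^(t))`. -/
def OBRSKneg (π : ArrayPair) : Bitab :=
  ⟨(stepState π π.t).1, (stepState π π.t).2⟩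

/-- The OBRSK correspondence on pairs of positive skew-symmetric lexicographic arrays. -/
def OBRSKpos (π : ArrayPair) : Bitab := iota (OBRSKneg (Lmap π))

/-- The OBRSK correspondence on pairs of nonvanishing skew-symmetric lexicographic arrays:
the bitableau whose negative and positive parts are the OBRSK images of the negative and
positive parts of the pair. -/
def OBRSK (π : ArrayPair) : Bitab :=
  ⟨(OBRSKneg π.negPart).P ++ (OBRSKpos π.posPart).P,
   (OBRSKneg π.negPart).Q ++ (OBRSKpos π.posPart).Q⟩

/-! ### The reverse step -/

/-- One row of reverse bounded insertion: the incoming entry `x` bumps the largest entry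
of the row smaller than `x`.  Returns the new row, the bumped-out entry, and the 1-indexed
forward position of the bumped box. -/
def revBumpRow (x : ℕ) (row : List ℕ) : List ℕ × ℕ × ℕ :=
  let k := (row.filter (fun y => decide (y < x))).length
  (row.set (k - 1) x, row.getD (k - 1) 0, k)

/-- Reverse bounded insertion upward through the given rows (listed bottom-to-top);
returns the new rows, the ejected entry, and the positions of the bumped boxes. -/
def revInsertUp : List (List ℕ) → ℕ → List (List ℕ) × ℕ × List ℕ
  | [], x => ([], x, [])
  | row :: rest, x =>
      let rj := revBumpRow x row
      let rec' := revInsertUp rest rj.2.1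
      (rj.1 :: rec'.1, rec'.2.1, rj.2.2 :: rec'.2.2)

/-- Dual reverse insertion upward through the given rows of `Q` (listed bottom-to-top),
along the dual (backward) positions `js`; returns the new rows and the ejected entry. -/
def revInsertUpQ : List (List ℕ) → List ℕ → ℕ → List (List ℕ) × ℕ
  | rows, [], x => (rows, x)
  | [], _ :: _, x => ([], x)
  | row :: rest, j :: js, x =>
      let idx := row.length - j
      let rec' := revInsertUpQ rest js (row.getD idx 0)
      (row.set idx x :: rec'.1, rec'.2)

/-- One reverse step of OBRSK: produces `(P', Q')` and the integers `a, b, c, d`. -/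
def reverseStep (B : Bitab) : Bitab × ℕ × ℕ × ℕ × ℕ :=
  let b := (B.Q.flatten.min?).getD 0
  let s := B.Q.length - 1 - B.Q.reverse.findIdx (fun r => r.contains b)
  let d := ((B.P.getD s []).getLast?).getD 0
  let P1 := modifyRow B.P s List.dropLast
  let Q1 := modifyRow B.Q s List.tail
  let rowS := P1.getD s []
  let k0 := (rowS.filter (fun y => decide (y < b))).length
  let x := rowS.getD (k0 - 1) 0
  let rowS' := rowS.eraseIdx (k0 - 1)
  let up := revInsertUp (P1.take s).reverse x
  let P' := up.1.reverse ++ rowS' :: P1.drop (s + 1)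
  let rowQ := Q1.getD s []
  let vQ := rowQ.getD (rowQ.length - k0) 0
  let rowQ' := rowQ.eraseIdx (rowQ.length - k0)
  let upQ := revInsertUpQ (Q1.take s).reverse up.2.2 vQ
  let Q' := upQ.1.reverse ++ rowQ' :: Q1.drop (s + 1)
  (⟨P'.filter (fun r => decide (r ≠ [])), Q'.filter (fun r => decide (r ≠ []))⟩,
    up.2.1, b, upQ.2, d)

/-! ### Multisets on ℕ², chains, boundedness -/

/-- The order on multisets on ℕ² : `msLE S T` means `S ≤ T`, i.e.
`S₍₁₎ − S₍₂₎ ≤ T₍₁₎ − T₍₂₎`. -/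
def msLE (S T : Multiset (ℕ × ℕ)) : Prop :=
  ∀ z : ℕ,
    ((T.filter (fun p => p.1 ≤ z)).card : ℤ) - ((T.filter (fun p => p.2 ≤ z)).card : ℤ) ≤
    ((S.filter (fun p => p.1 ≤ z)).card : ℤ) - ((S.filter (fun p => p.2 ≤ z)).card : ℤ)

namespace Bitab

/-- `(P,Q)^up` : the multiset of pairs formed by the top rows. -/
def up (B : Bitab) : Multiset (ℕ × ℕ) := ↑((B.P.getD 0 []).zip (B.Q.getD 0 []))

/-- `(P,Q)^down` : the multiset of pairs formed by the bottom rows. -/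
def down (B : Bitab) : Multiset (ℕ × ℕ) :=
  ↑((B.P.getD (B.P.length - 1) []).zip (B.Q.getD (B.Q.length - 1) []))

end Bitab

/-- `σ` represents a dual pair of chains in ℕ² : `σ` is a pair of skew-symmetric
lexicographic arrays whose first array lists a chain (first coordinates strictly
increasing, second coordinates strictly decreasing along the columns). -/
def IsChainArr (σ : ArrayPair) : Prop :=
  σ.SkewSymmLex ∧ List.Chain' (· < ·) σ.a ∧ List.Chain' (· > ·) σ.b

/-- `σ` represents a dual pair of chains in the pair of skew-symmetric multisets
represented by `π` : both chains are contained in the respective underlying sets, and for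
each column of the chain array, the dual column within `π` of its leftmost occurrence
coincides with its dual column within `σ`. -/
def DualChainIn (π σ : ArrayPair) : Prop :=
  IsChainArr σ ∧
  (∀ x ∈ σ.a.zip σ.b, x ∈ π.a.zip π.b) ∧
  (∀ x ∈ σ.d.zip σ.c, x ∈ π.d.zip π.c) ∧
  (∀ i < σ.t,
    (π.c.getD (π.t - 1 - (π.b.zip π.a).findIdx (fun x => x == (σ.b.getD i 0, σ.a.getD i 0))) 0,
     π.d.getD (π.t - 1 - (π.b.zip π.a).findIdx (fun x => x == (σ.b.getD i 0, σ.a.getD i 0))) 0)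
      = (σ.c.getD (σ.t - 1 - i) 0, σ.d.getD (σ.t - 1 - i) 0))

/-- The pair represented by `π` is bounded below by `T` : for every dual pair of chains in
it, `T ≤ OBRSK(negative part of the chain pair)^up`. -/
def PairBoundedT (π : ArrayPair) (T : Finset (ℕ × ℕ)) : Prop :=
  ∀ σ : ArrayPair, DualChainIn π σ → msLE ↑T.val (OBRSK σ.negPart).up

/-- The pair represented by `π` is bounded above by `W` : for every dual pair of chains in
it, `OBRSK(positive part of the chain pair)^down ≤ W`. -/
def PairBoundedW (π : ArrayPair) (W : Finset (ℕ × ℕ)) : Prop :=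
  ∀ σ : ArrayPair, DualChainIn π σ → msLE (OBRSK σ.posPart).down ↑W.val

/-- The pair represented by `π` is bounded by `T, W`. -/
def PairBounded (π : ArrayPair) (T W : Finset (ℕ × ℕ)) : Prop :=
  PairBoundedT π T ∧ PairBoundedW π W

namespace Bitab

/-- The bitableau is bounded below by `T` : if its top row is negative (i.e. the negative
part is nonempty), then `T₍₁₎ − T₍₂₎ ≤ P₁⁻ − Q₁⁻`. -/
def BoundedByT (B : Bitab) (T : Finset (ℕ × ℕ)) : Prop :=
  diffLT (B.P.getD 0 []) (B.Q.getD 0 []) [] [] →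
    msLE ↑T.val ↑((B.P.getD 0 []).zip (B.Q.getD 0 []))

/-- The bitableau is bounded above by `W` : if its bottom row is positive (i.e. the
positive part is nonempty), then `P⁺_s − Q⁺_s ≤ W₍₁₎ − W₍₂₎`. -/
def BoundedByW (B : Bitab) (W : Finset (ℕ × ℕ)) : Prop :=
  diffLT [] [] (B.P.getD (B.P.length - 1) []) (B.Q.getD (B.Q.length - 1) []) →
    msLE ↑((B.P.getD (B.P.length - 1) []).zip (B.Q.getD (B.Q.length - 1) [])) ↑W.val

/-- The bitableau is bounded by `T, W`. -/
def BoundedBy (B : Bitab) (T W : Finset (ℕ × ℕ)) : Prop :=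
  B.BoundedByT T ∧ B.BoundedByW W

end Bitab

/-- A negative subset of ℕ². -/
def NegSubset (T : Finset (ℕ × ℕ)) : Prop := ∀ p ∈ T, p.1 < p.2

/-- A positive subset of ℕ². -/
def PosSubset (W : Finset (ℕ × ℕ)) : Prop := ∀ p ∈ W, p.2 < p.1

/-- The coordinate projections `T₍₁₎`, `T₍₂₎` have no repeated elements. -/
def ProjNodup (T : Finset (ℕ × ℕ)) : Prop :=
  (T.val.map Prod.fst).Nodup ∧ (T.val.map Prod.snd).Nodup

/-! ### The orthogonal Grassmannian combinatorics -/

/-- `Ĩ(d)` : the set of `d`-element subsets of `{1, …, 2d}` containing exactly one of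
`k, k* = 2d+1−k` for every `k`, with an even number of elements exceeding `d`. -/
def Itilde (d : ℕ) : Set (Finset ℕ) :=
  {v | v ⊆ Finset.Icc 1 (2 * d) ∧ v.card = d ∧
    (∀ k ∈ Finset.Icc 1 (2 * d), (k ∈ v ↔ (2 * d + 1 - k) ∉ v)) ∧
    Even ((v.filter (fun x => d < x)).card)}

/-- `OR(β) = {(r,c) : r ∈ β̄, c ∈ β, r < c*}`. -/
def ORset (d : ℕ) (β : Finset ℕ) : Set (ℕ × ℕ) :=
  {p | p.1 ∈ Finset.Icc 1 (2 * d) ∧ p.1 ∉ β ∧ p.2 ∈ β ∧ p.1 < 2 * d + 1 - p.2}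

/-- `U^# := {(c*, r*) : (r,c) ∈ U}` (with multiplicities). -/
def hashMS (d : ℕ) (U : Multiset (ℕ × ℕ)) : Multiset (ℕ × ℕ) :=
  U.map (fun p => (2 * d + 1 - p.2, 2 * d + 1 - p.1))

/-- `ψ(π)` is a pair of skew-symmetric multisets on `β̄×β`, i.e. of the form `{U, U^#}`
with `U` a multiset on `OR(β)`. -/
def ArrayPair.OnBB (d : ℕ) (β : Finset ℕ) (π : ArrayPair) : Prop :=
  (∀ x ∈ π.a.zip π.b, x ∈ ORset d β) ∧
  (↑(π.d.zip π.c) : Multiset (ℕ × ℕ)) = hashMS d ↑(π.a.zip π.b)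

/-- A skew-symmetric notched bitableau is on `β̄×β` : all entries of `P` are in `β̄`, all
entries of `Q` are in `β`, and every entry plus its dual equals `2d+1`. -/
def Bitab.OnBB (d : ℕ) (β : Finset ℕ) (B : Bitab) : Prop :=
  (∀ r ∈ B.P, ∀ x ∈ r, x ∈ Finset.Icc 1 (2 * d) ∧ x ∉ β) ∧
  (∀ r ∈ B.Q, ∀ x ∈ r, x ∈ β) ∧
  (∀ p ∈ B.entryDual, p.1 + p.2 = 2 * d + 1)

/-- The partial order on `Ĩ(d)` : `v ≤ w` iff the `i`-th smallest element of `v` is `≤`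
the `i`-th smallest element of `w` for every `i`. -/
def IleD (v w : Finset ℕ) : Prop :=
  v.card = w.card ∧
  ∀ i < v.card, (v.sort (· ≤ ·)).getD i 0 ≤ (w.sort (· ≤ ·)).getD i 0

def IltD (v w : Finset ℕ) : Prop := IleD v w ∧ v ≠ w

/-- `I_β(Skew-symm)` : pairs `(R, S)` with `R ⊆ β̄`, `S ⊆ β`, `|R| = |S|` even, and
`r_i + s_{2l+1−i} = 2d+1` for all `i`. -/
def IbSS (d : ℕ) (β : Finset ℕ) : Set (Finset ℕ × Finset ℕ) :=
  {RS | RS.1 ⊆ Finset.Icc 1 (2 * d) \ β ∧ RS.2 ⊆ β ∧ RS.1.card = RS.2.card ∧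
    Even RS.1.card ∧
    ∀ i < RS.1.card,
      (RS.1.sort (· ≤ ·)).getD i 0 + (RS.2.sort (· ≤ ·)).getD (RS.1.card - 1 - i) 0
        = 2 * d + 1}

/-- `θ_i := P_i ∪̇ (β ∖ Q_i)`. -/
def rowTheta (β : Finset ℕ) (p q : List ℕ) : Finset ℕ := p.toFinset ∪ (β \ q.toFinset)

/-- An extended `β`-chain, listed with strictly increasing rows and strictly decreasing
columns. -/
def IsExtChain (ch : List (ℕ × ℕ)) : Prop :=
  List.Chain' (fun x y => x.1 < y.1 ∧ y.2 < x.2) ch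

/-- The negative part `C⁻` of an extended chain: the elements `(r,c)` with `r < c`. -/
def chainNeg (ch : List (ℕ × ℕ)) : List (ℕ × ℕ) := ch.filter (fun p => decide (p.1 < p.2))

/-- The positive part `C⁺` of an extended chain: the elements `(r,c)` with `r > c`. -/
def chainPos (ch : List (ℕ × ℕ)) : List (ℕ × ℕ) := ch.filter (fun p => decide (p.2 < p.1))

/-- `ψ⁻¹({C, C^#})` : the pair of arrays corresponding to the dual pair of chains
`{C, C^#}` determined by an extended `β`-chain `C`. -/
def chainToPair (d : ℕ) (ch : List (ℕ × ℕ)) : ArrayPair :=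
  ⟨ch.map Prod.fst, ch.map Prod.snd,
   (ch.map (fun p => 2 * d + 1 - p.1)).reverse,
   (ch.map (fun p => 2 * d + 1 - p.2)).reverse⟩

/-- The terminating row number `K` of the bounded insertion performed at step `i`
(1-indexed) of the OBRSK algorithm. -/
def stepK (π : ArrayPair) (i : ℕ) : ℕ :=
  ((insertP (π.quads.getD (i - 1) (0, 0, 0, 0)).2.1 (stepState π (i - 1)).1
      (π.quads.getD (i - 1) (0, 0, 0, 0)).1).2).length

end OBRSKPaper


namespace OBRSKPaper

/-! #### Auxiliary lemmas for row-strictness of the OBRSK `P`-tableaux -/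

/-- The value placed by an insertion path `js` at row `r`. -/
def pv (P : List (List ℕ)) (js : List ℕ) (r : ℕ) : ℕ :=
  (P.getD r []).getD (js.getD r 0 - 1) 0

@[simp] lemma pv_cons_zero (A : List ℕ) (P : List (List ℕ)) (j : ℕ) (js : List ℕ) :
    pv (A :: P) (j :: js) 0 = A.getD (j - 1) 0 := rfl

@[simp] lemma pv_cons_succ (A : List ℕ) (P : List (List ℕ)) (j : ℕ) (js : List ℕ) (r : ℕ) :
    pv (A :: P) (j :: js) (r + 1) = pv P js r := rfl

lemma length_insertAt (l : List ℕ) (i x : ℕ) (h : i ≤ l.length) :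
    (insertAt l i x).length = l.length + 1 := by
  simp [insertAt]; omega

lemma mem_insertAt {l : List ℕ} {i x y : ℕ} (h : y ∈ insertAt l i x) : y ∈ l ∨ y = x := by
  simp only [insertAt, List.mem_append, List.mem_cons] at h
  rcases h with h | h | h
  · exact Or.inl (List.mem_of_mem_take h)
  · exact Or.inr h
  · exact Or.inl (List.mem_of_mem_drop h)

lemma getD_insertAt_self {l : List ℕ} {i x : ℕ} (h : i ≤ l.length) :
    (insertAt l i x).getD i 0 = x := by
  have hl : (l.take i).length = i := by simp; omega
  rw [insertAt, List.getD_eq_getElem _ _ (by simp [List.length_append]; omega),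
    List.getElem_append_right (by omega)]
  simp [hl]

lemma sorted_getElem_mono {l : List ℕ} (hs : l.Pairwise (· < ·)) {i j : ℕ} (hij : i ≤ j)
    (hj : j < l.length) : l[i]'(by omega) ≤ l[j] := by
  rcases Nat.lt_or_ge i j with h | h
  · exact le_of_lt ((List.pairwise_iff_getElem.1 hs) i j (by omega) hj h)
  · have : i = j := by omega
    subst this; rfl

lemma sorted_insertAt {l : List ℕ} {i x : ℕ} (hs : l.Pairwise (· < ·)) (hi : i ≤ l.length)
    (h1 : ∀ y ∈ l.take i, y < x) (h2 : ∀ y ∈ l.drop i, x < y) :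
    (insertAt l i x).Pairwise (· < ·) := by
  have hsplit : l.take i ++ l.drop i = l := List.take_append_drop i l
  have hs' : (l.take i ++ l.drop i).Pairwise (· < ·) := by rw [hsplit]; exact hs
  rw [List.pairwise_append] at hs'
  rw [insertAt, List.pairwise_append]
  refine ⟨hs'.1, ?_, ?_⟩
  · rw [List.pairwise_cons]
    exact ⟨h2, hs'.2.1⟩
  · intro a ha y hy
    rcases List.mem_cons.1 hy with rfl | hy
    · exact h1 a ha
    · exact hs'.2.2 a ha y hy

lemma sorted_set {l : List ℕ} {j x b : ℕ} (hs : l.Pairwise (· < ·)) (hj : j < l.length)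
    (hpj : x ≤ l.getD j 0 ∧ l.getD j 0 < b)
    (hbefore : ∀ k, k < j → ¬ (x ≤ l.getD k 0 ∧ l.getD k 0 < b)) :
    (l.set j x).Pairwise (· < ·) := by
  rw [List.getD_eq_getElem _ _ hj] at hpj
  rw [List.pairwise_iff_getElem] at hs ⊢
  intro i k hi hk hik
  simp only [List.length_set] at hi hk
  rw [List.getElem_set, List.getElem_set]
  by_cases hji : j = i
  · subst hji
    simp only [if_pos rfl, if_neg (by omega : ¬ j = k)]
    exact lt_of_le_of_lt hpj.1 (hs j k hi hk hik)
  · by_cases hjk : j = k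
    · subst hjk
      simp only [if_neg hji, if_pos rfl]
      have hib : l[i] < b := lt_of_lt_of_le (hs i j hi hk hik) (le_of_lt hpj.2)
      have h2 := hbefore i hik
      rw [List.getD_eq_getElem _ _ (by omega)] at h2
      push_neg at h2
      by_contra hcon
      push_neg at hcon
      exact absurd hib (not_lt.2 (h2 hcon))
    · simp only [if_neg hji, if_neg hjk]
      exact hs i k hi hk hik

lemma sorted_append_singleton {l : List ℕ} {d : ℕ} (hs : l.Pairwise (· < ·))
    (h : ∀ y ∈ l, y < d) : (l ++ [d]).Pairwise (· < ·) := by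
  rw [List.pairwise_append]
  exact ⟨hs, List.pairwise_singleton _ _, fun a ha y hy => by
    rcases List.mem_singleton.1 hy with rfl; exact h a ha⟩

lemma takeWhile_getElem_false {p : ℕ → Bool} {l : List ℕ}
    (h : (l.takeWhile p).length < l.length) :
    ¬ p (l[(l.takeWhile p).length]) = true := by
  induction l with
  | nil => simp at h
  | cons a l ih =>
      by_cases hp : p a
      · simp only [List.takeWhile_cons, if_pos hp] at h ⊢
        simp only [List.length_cons] at h ⊢
        simpa using ih (by omega)
      · simp [List.takeWhile_cons, hp]

lemma take_takeWhile_length {p : ℕ → Bool} (l : List ℕ) :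
    l.take ((l.takeWhile p).length) = l.takeWhile p := by
  induction l with
  | nil => rfl
  | cons a l ih =>
      by_cases hp : p a
      · simp [List.takeWhile_cons, hp, ih]
      · simp [List.takeWhile_cons, hp]

lemma insertP_nil (b x : ℕ) : insertP b [] x = ([[x]], [1]) := rfl

lemma insertP_cons_none {b x : ℕ} {row : List ℕ} (rest : List (List ℕ))
    (h : row.findIdx? (fun y => decide (x ≤ y ∧ y < b)) = none) :
    insertP b (row :: rest) x =
      (insertAt row ((row.takeWhile (fun y => decide (y < b))).length) x :: rest,
       [(row.takeWhile (fun y => decide (y < b))).length + 1]) := by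
  simp only [insertP, insertRowP, h]

lemma insertP_cons_some {b x j : ℕ} {row : List ℕ} (rest : List (List ℕ))
    (h : row.findIdx? (fun y => decide (x ≤ y ∧ y < b)) = some j) :
    insertP b (row :: rest) x =
      ((row.set j x) :: (insertP b rest (row.getD j 0)).1,
       (j + 1) :: (insertP b rest (row.getD j 0)).2) := by
  simp only [insertP, insertRowP, h]

/-- Specification of one bounded insertion. -/
structure ISpec (b : ℕ) (rows P1 : List (List ℕ)) (js : List ℕ) (x : ℕ) : Prop where
  ne : js ≠ []
  len : js.length ≤ P1.length
  strict : ∀ row ∈ P1, row.Pairwise (· < ·)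
  drop_eq : P1.drop js.length = rows.drop js.length
  pv0 : pv P1 js 0 = x
  path : ∀ r < js.length, 1 ≤ js.getD r 0 ∧ js.getD r 0 - 1 < (P1.getD r []).length ∧
    x ≤ pv P1 js r ∧ pv P1 js r < b
  bump : ∀ r, r + 1 < js.length → pv P1 js r ≤ pv P1 js (r+1) ∧
    js.getD r 0 - 1 < (rows.getD r []).length ∧
    pv P1 js (r+1) = (rows.getD r []).getD (js.getD r 0 - 1) 0
  content : ∀ r < js.length, ∀ y ∈ P1.getD r [], y ∈ rows.getD r [] ∨ y = pv P1 js r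

theorem insertP_spec (b : ℕ) : ∀ (rows : List (List ℕ)) (x : ℕ), x < b →
    (∀ row ∈ rows, row.Pairwise (· < ·)) →
    ISpec b rows (insertP b rows x).1 (insertP b rows x).2 x := by
  intro rows
  induction rows with
  | nil =>
      intro x hxb _
      rw [insertP_nil]
      refine ⟨by simp, by simp, ?_, by simp, by simp [pv], ?_, by simp, ?_⟩
      · intro row hrow
        simp only [List.mem_singleton] at hrow
        subst hrow
        exact List.pairwise_singleton _ x
      · intro r hr
        simp only [List.length_singleton] at hr
        interval_cases r
        refine ⟨by simp, by simp, by simp [pv], by simpa [pv] using hxb⟩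
      · intro r hr y hy
        simp only [List.length_singleton] at hr
        interval_cases r
        simp only [List.getD_cons_zero, List.mem_singleton] at hy
        exact Or.inr (by simp [pv, hy])
  | cons row rest ih =>
      intro x hxb hsorted
      have hrow : row.Pairwise (· < ·) := hsorted row (by simp)
      have hrest : ∀ r ∈ rest, r.Pairwise (· < ·) := fun r hr => hsorted r (by simp [hr])
      rcases hfi : row.findIdx? (fun y => decide (x ≤ y ∧ y < b)) with _ | j
      · -- terminal row : new box
        rw [insertP_cons_none rest hfi]
        set j := (row.takeWhile (fun y => decide (y < b))).length with hjdef
        have hjle : j ≤ row.length := List.Sublist.length_le (List.takeWhile_sublist _)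
        have hnone : ∀ y ∈ row, ¬ (x ≤ y ∧ y < b) := by
          intro y hy
          have := (List.findIdx?_eq_none_iff.1 hfi) y hy
          simpa using this
        have htake : ∀ y ∈ row.take j, y < x := by
          intro y hy
          rw [hjdef, take_takeWhile_length] at hy
          have h1 : y < b := by simpa using List.mem_takeWhile_imp hy
          have h2 := hnone y (List.takeWhile_subset _ hy)
          omega
        have hdrop : ∀ y ∈ row.drop j, x < y := by
          intro y hy
          obtain ⟨i, hi, rfl⟩ := List.mem_iff_getElem.1 hy
          rw [List.getElem_drop]
          have hjlen : j < row.length := by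
            simp only [List.length_drop] at hi
            omega
          have hb := takeWhile_getElem_false (p := fun y => decide (y < b)) (l := row)
            (by omega)
          have hbj : b ≤ row[j] := by
            have h2 : ¬ row[(List.takeWhile (fun y => decide (y < b)) row).length]'(by omega) < b := by
              simpa using hb
            rw [not_lt] at h2
            convert h2 using 2
          have hilen : j + i < row.length := by
            simp only [List.length_drop] at hi
            omega
          have hmono : row[j] ≤ row[j + i] := sorted_getElem_mono hrow (by omega) hilen
          omega
        have hlen : (insertAt row j x).length = row.length + 1 := length_insertAt _ _ _ hjle
        have hgd : (insertAt row j x).getD j 0 = x := getD_insertAt_self hjle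
        have hpv : pv (insertAt row j x :: rest) [j + 1] 0 = x := by
          rw [pv_cons_zero, Nat.add_sub_cancel]; exact hgd
        refine ⟨by simp, by simp, ?_, by simp, hpv, ?_, by simp, ?_⟩
        · intro r hr
          rcases List.mem_cons.1 hr with rfl | hr
          · exact sorted_insertAt hrow hjle htake hdrop
          · exact hrest r hr
        · intro r hr
          simp only [List.length_singleton] at hr
          interval_cases r
          refine ⟨by simp, ?_, by rw [hpv], by rw [hpv]; exact hxb⟩
          simp only [List.getD_cons_zero, Nat.add_sub_cancel]
          omega
        · intro r hr y hy
          simp only [List.length_singleton] at hr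
          interval_cases r
          simp only [List.getD_cons_zero] at hy ⊢
          rcases mem_insertAt hy with h | h
          · exact Or.inl h
          · exact Or.inr (by rw [hpv]; exact h)
      · -- bumping case
        obtain ⟨hjlt, hpj, hmin⟩ := List.findIdx?_eq_some_iff_getElem.1 hfi
        have hpj' : x ≤ row[j] ∧ row[j] < b := by simpa using hpj
        have hy : row.getD j 0 = row[j] := List.getD_eq_getElem _ _ hjlt
        have hyb : row.getD j 0 < b := by rw [hy]; exact hpj'.2
        have IH := ih (row.getD j 0) hyb hrest
        rw [insertP_cons_some rest hfi]
        set R' := (insertP b rest (row.getD j 0)).1 with hR'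
        set js' := (insertP b rest (row.getD j 0)).2 with hjs'
        have hpv0 : pv (row.set j x :: R') ((j+1) :: js') 0 = x := by
          simp only [pv_cons_zero, Nat.add_sub_cancel]
          rw [List.getD_eq_getElem _ _ (by simpa using hjlt), List.getElem_set, if_pos rfl]
        refine ⟨by simp, by simpa using IH.len, ?_, ?_, hpv0, ?_, ?_, ?_⟩
        · intro r hr
          rcases List.mem_cons.1 hr with rfl | hr
          · refine sorted_set (b := b) hrow hjlt ⟨?_, ?_⟩ ?_
            · rw [hy]; exact hpj'.1
            · rw [hy]; exact hpj'.2
            · intro k hk hcon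
              have hklt : k < row.length := by omega
              rw [List.getD_eq_getElem _ _ hklt] at hcon
              exact absurd hcon (by simpa using hmin k hk)
          · exact IH.strict r hr
        · simpa using IH.drop_eq
        · intro r hr
          match r with
          | 0 =>
              refine ⟨by simp, ?_, le_of_eq hpv0.symm, by rw [hpv0]; exact hxb⟩
              simp only [List.getD_cons_zero, Nat.add_sub_cancel, List.length_set]
              exact hjlt
          | r + 1 =>
              have hr' : r < js'.length := by simpa using hr
              have h := IH.path r hr'
              refine ⟨by simpa using h.1, by simpa using h.2.1, ?_, by simpa using h.2.2.2⟩
              calc x ≤ row.getD j 0 := by rw [hy]; exact hpj'.1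
                _ ≤ pv R' js' r := h.2.2.1
        · intro r hr
          match r with
          | 0 =>
              simp only [List.length_cons] at hr
              have hne : js' ≠ [] := by
                intro hcon
                rw [hcon] at hr
                simp at hr
              refine ⟨?_, by simpa using hjlt, ?_⟩
              · rw [hpv0]
                simp only [pv_cons_succ]
                calc x ≤ row.getD j 0 := by rw [hy]; exact hpj'.1
                  _ = pv R' js' 0 := IH.pv0.symm
              · simp only [pv_cons_succ, List.getD_cons_zero, Nat.add_sub_cancel]
                exact IH.pv0
          | r + 1 =>
              have h := IH.bump r (by simpa using hr)
              exact ⟨by simpa using h.1, by simpa using h.2.1, by simpa using h.2.2⟩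
        · intro r hr y' hy'
          match r with
          | 0 =>
              simp only [List.getD_cons_zero] at hy' ⊢
              rcases List.mem_or_eq_of_mem_set hy' with h | h
              · exact Or.inl h
              · exact Or.inr (by rw [hpv0]; exact h)
          | r + 1 =>
              have h := IH.content r (by simpa using hr) y' (by simpa using hy')
              simpa using h

lemma insertP_snd_ne (b : ℕ) (rows : List (List ℕ)) (x : ℕ) : (insertP b rows x).2 ≠ [] := by
  cases rows with
  | nil => rw [insertP_nil]; simp
  | cons row rest =>
      rcases hfi : row.findIdx? (fun y => decide (x ≤ y ∧ y < b)) with _ | j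
      · rw [insertP_cons_none rest hfi]; simp
      · rw [insertP_cons_some rest hfi]; simp

theorem insertP_guided (b : ℕ) : ∀ (jsO : List ℕ) (rows : List (List ℕ)) (x : ℕ),
    (∀ row ∈ rows, row.Pairwise (· < ·)) →
    jsO ≠ [] → jsO.length ≤ rows.length →
    (∀ r < jsO.length, 1 ≤ jsO.getD r 0 ∧ jsO.getD r 0 - 1 < (rows.getD r []).length ∧
      pv rows jsO r < b) →
    (∀ r, r + 1 < jsO.length → pv rows jsO r ≤ pv rows jsO (r+1)) →
    x ≤ pv rows jsO 0 →
    jsO.length < (insertP b rows x).2.length ∧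
    ∀ r < jsO.length, (insertP b rows x).2.getD r 0 ≤ jsO.getD r 0 := by
  intro jsO
  induction jsO with
  | nil => intro rows x _ h; exact absurd rfl h
  | cons j0 jsR ih =>
      intro rows x hsorted _ hlen hq hmono hx
      obtain ⟨row, rest, rfl⟩ : ∃ row rest, rows = row :: rest := by
        cases rows with
        | nil => simp at hlen
        | cons row rest => exact ⟨_, _, rfl⟩
      have hrow : row.Pairwise (· < ·) := hsorted row (by simp)
      have h0 := hq 0 (by simp)
      have hj0 : j0 - 1 < row.length := by simpa using h0.2.1
      have hvb : row.getD (j0 - 1) 0 < b := by simpa [pv] using h0.2.2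
      have hxv : x ≤ row.getD (j0 - 1) 0 := by simpa [pv] using hx
      have h1j0 : 1 ≤ j0 := by simpa using h0.1
      have hge : row.getD (j0 - 1) 0 = row[j0 - 1] := List.getD_eq_getElem _ _ hj0
      rcases hfi : row.findIdx? (fun y => decide (x ≤ y ∧ y < b)) with _ | k
      · exfalso
        have := (List.findIdx?_eq_none_iff.1 hfi) (row[j0 - 1]) (List.getElem_mem hj0)
        rw [← hge] at this
        simp only [decide_eq_false_iff_not] at this
        exact this ⟨hxv, hvb⟩
      · obtain ⟨hk, hkp, hkmin⟩ := List.findIdx?_eq_some_iff_getElem.1 hfi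
        have hkle : k ≤ j0 - 1 := by
          by_contra hcon
          push_neg at hcon
          have := hkmin (j0 - 1) hcon
          rw [← hge] at this
          simp only [decide_eq_true_eq] at this
          exact this ⟨hxv, hvb⟩
        rw [insertP_cons_some rest hfi]
        have hkp' : x ≤ row[k] ∧ row[k] < b := by simpa using hkp
        have hyv : row.getD k 0 ≤ row.getD (j0 - 1) 0 := by
          rw [hge, List.getD_eq_getElem _ _ hk]
          exact sorted_getElem_mono hrow hkle hj0
        have hyb : row.getD k 0 < b := by
          rw [List.getD_eq_getElem _ _ hk]; exact hkp'.2
        cases jsR with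
        | nil =>
            constructor
            · have := insertP_snd_ne b rest (row.getD k 0)
              have : (insertP b rest (row.getD k 0)).2.length ≠ 0 := by
                simpa [List.length_eq_zero_iff] using this
              simp only [List.length_cons, List.length_nil]
              omega
            · intro r hr
              simp only [List.length_cons, List.length_nil] at hr
              interval_cases r
              simp only [List.getD_cons_zero]
              omega
        | cons j1 jsR' =>
            have hrest : ∀ r ∈ rest, r.Pairwise (· < ·) := fun r hr => hsorted r (by simp [hr])
            have hlen' : (j1 :: jsR').length ≤ rest.length := by simpa using hlen
            have hq' : ∀ r < (j1 :: jsR').length, 1 ≤ (j1 :: jsR').getD r 0 ∧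
                (j1 :: jsR').getD r 0 - 1 < (rest.getD r []).length ∧
                pv rest (j1 :: jsR') r < b := by
              intro r hr
              have := hq (r + 1) (by simpa using hr)
              simpa using this
            have hmono' : ∀ r, r + 1 < (j1 :: jsR').length →
                pv rest (j1 :: jsR') r ≤ pv rest (j1 :: jsR') (r+1) := by
              intro r hr
              have := hmono (r + 1) (by simpa using hr)
              simpa using this
            have hx' : row.getD k 0 ≤ pv rest (j1 :: jsR') 0 := by
              have := hmono 0 (by simp)
              simp only [pv_cons_succ] at this
              calc row.getD k 0 ≤ row.getD (j0 - 1) 0 := hyv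
                _ = pv (row :: rest) (j0 :: j1 :: jsR') 0 := by simp [pv]
                _ ≤ pv rest (j1 :: jsR') 0 := this
            obtain ⟨ihlen, ihpos⟩ := ih rest (row.getD k 0) hrest (by simp) hlen' hq' hmono' hx'
            constructor
            · simpa using ihlen
            · intro r hr
              match r with
              | 0 =>
                  simp only [List.getD_cons_zero]
                  omega
              | r + 1 =>
                  have := ihpos r (by simpa using hr)
                  simpa using this

/-- The `P`-part of one OBRSK step. -/
def pstep (P : List (List ℕ)) (q : ℕ × ℕ × ℕ × ℕ) : List (List ℕ) :=
  modifyRow (insertP q.2.1 P q.1).1 ((insertP q.2.1 P q.1).2.length - 1)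
    (fun r => r ++ [q.2.2.2])

lemma obrskStep_fst (PQ : List (List ℕ) × List (List ℕ)) (q : ℕ × ℕ × ℕ × ℕ) :
    (obrskStep PQ q).1 = pstep PQ.1 q := by
  rcases q with ⟨x, b, c, d⟩
  rfl

lemma modifyRow_eq_set (rows : List (List ℕ)) (k : ℕ) (f : List ℕ → List ℕ)
    (h : k < rows.length) :
    modifyRow rows k f = rows.set k (f (rows.getD k [])) := by
  induction rows generalizing k with
  | nil => simp at h
  | cons r rest ih =>
      match k with
      | 0 => simp [modifyRow]
      | k + 1 =>
          have := ih k (by simpa using h)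
          simp only [modifyRow, List.take_succ_cons, List.drop_succ_cons, List.set_cons_succ,
            List.getD_cons_succ] at this ⊢
          rw [List.cons_append, this]

lemma getD_set_rows (P1 : List (List ℕ)) (i : ℕ) (A : List ℕ) (hi : i < P1.length) (r : ℕ) :
    (P1.set i A).getD r [] = if i = r then A else P1.getD r [] := by
  by_cases hr : r < P1.length
  · rw [List.getD_eq_getElem _ _ (by simpa using hr), List.getElem_set]
    split_ifs
    · rfl
    · rw [List.getD_eq_getElem _ _ hr]
  · rw [if_neg (by omega), List.getD_eq_default _ _ (by simpa using Nat.le_of_not_lt hr),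
      List.getD_eq_default _ _ (by omega)]

lemma getD_row_mem {P : List (List ℕ)} {r y : ℕ} (h : y ∈ P.getD r []) :
    P.getD r [] ∈ P := by
  by_cases hr : r < P.length
  · rw [List.getD_eq_getElem _ _ hr]
    exact List.getElem_mem hr
  · rw [List.getD_eq_default _ _ (Nat.le_of_not_lt hr)] at h
    simp at h

lemma getD_eq_of_drop_eq {P1 P : List (List ℕ)} {K : ℕ} (h : P1.drop K = P.drop K)
    {r : ℕ} (hr : K ≤ r) : P1.getD r [] = P.getD r [] := by
  have h1 : P1[r]? = P[r]? := by
    have e1 : P1[r]? = (P1.drop K)[r - K]? := by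
      rw [List.getElem?_drop]
      congr 1
      omega
    have e2 : P[r]? = (P.drop K)[r - K]? := by
      rw [List.getElem?_drop]
      congr 1
      omega
    rw [e1, e2, h]
  simp only [List.getD_eq_getElem?_getD, h1]

lemma getD_append_left {l : List ℕ} {a i : ℕ} (h : i < l.length) :
    (l ++ [a]).getD i 0 = l.getD i 0 := by
  rw [List.getD_eq_getElem _ _ (by simp; omega), List.getElem_append_left h,
    List.getD_eq_getElem _ _ h]

/-- The invariant carried along the OBRSK algorithm: `x, b, d` are the values
`a_i, b_i, d'_i` of the last step performed, `js` its insertion path. -/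
structure InvP (P : List (List ℕ)) (x b d : ℕ) (js : List ℕ) : Prop where
  strict : ∀ row ∈ P, row.Pairwise (· < ·)
  le_d : ∀ r : ℕ, ∀ y ∈ P.getD r [], y ≤ d
  ne : js ≠ []
  len : js.length ≤ P.length
  path : ∀ r < js.length, 1 ≤ js.getD r 0 ∧ js.getD r 0 - 1 < (P.getD r []).length ∧
    x ≤ pv P js r ∧ pv P js r < b ∧ pv P js r < d
  mono : ∀ r, r + 1 < js.length → pv P js r ≤ pv P js (r+1)
  below : ∀ r, js.length ≤ r → ∀ y ∈ P.getD r [], y < d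

theorem indStep {P : List (List ℕ)} {x b d : ℕ} {js : List ℕ} (h : InvP P x b d js)
    {x' b' c' d' : ℕ} (h1 : x' < b') (h2 : x' < d') (h3 : d ≤ d')
    (h4 : d = d' → b = b' ∧ x' ≤ x) :
    InvP (pstep P (x', b', c', d')) x' b' d' (insertP b' P x').2 := by
  have S := insertP_spec b' P x' h1 h.strict
  set P1 := (insertP b' P x').1 with hP1
  set js' := (insertP b' P x').2 with hjs'
  set K := js'.length with hK
  have hK1 : 1 ≤ K := by
    rw [hK]
    exact List.length_pos_iff.2 S.ne
  -- In the equal-`d` case, the new path lies weakly left of the old one and is longer.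
  have hguid : d = d' → js.length < K ∧ ∀ r < js.length, js'.getD r 0 ≤ js.getD r 0 := by
    intro hd
    obtain ⟨hbb, hxx⟩ := h4 hd
    apply insertP_guided b' js P x' h.strict h.ne h.len
    · intro r hr
      obtain ⟨a1, a2, _, a4, _⟩ := h.path r hr
      exact ⟨a1, a2, by rw [← hbb]; exact a4⟩
    · exact h.mono
    · have := (h.path 0 (List.length_pos_iff.2 h.ne)).2.2.1
      omega
  -- every value placed along the new path is `< d'`
  have key1 : ∀ r < K, pv P1 js' r < d' := by
    intro r hr
    match r with
    | 0 => rw [S.pv0]; exact h2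
    | r + 1 =>
        have hb := S.bump r (by omega)
        have hmem : (P.getD r []).getD (js'.getD r 0 - 1) 0 ∈ P.getD r [] := by
          rw [List.getD_eq_getElem _ _ hb.2.1]
          exact List.getElem_mem hb.2.1
        rcases Nat.lt_or_ge d d' with hdd | hdd
        · have := h.le_d r _ hmem
          rw [hb.2.2]
          omega
        · have hd : d = d' := by omega
          obtain ⟨hlen2, hpos⟩ := hguid hd
          rw [hb.2.2]
          by_cases hrK : r < js.length
          · have hp := h.path r hrK
            have hle : js'.getD r 0 - 1 ≤ js.getD r 0 - 1 := by
              have := hpos r hrK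
              omega
            have hval : (P.getD r []).getD (js'.getD r 0 - 1) 0 ≤ pv P js r := by
              unfold pv
              rw [List.getD_eq_getElem _ _ hb.2.1, List.getD_eq_getElem _ _ hp.2.1]
              exact sorted_getElem_mono (h.strict _ (getD_row_mem hmem)) hle hp.2.1
            have := hp.2.2.2.2
            omega
          · have := h.below r (by omega) _ hmem
            omega
  -- every entry of the old rows at index `≥ K - 1` is `< d'`
  have key3 : ∀ r, K - 1 ≤ r → ∀ y ∈ P.getD r [], y < d' := by
    intro r hr y hy
    rcases Nat.lt_or_ge d d' with hdd | hdd
    · have := h.le_d r y hy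
      omega
    · have hd : d = d' := by omega
      obtain ⟨hlen2, _⟩ := hguid hd
      have := h.below r (by omega) y hy
      omega
  -- all entries of the terminal row of `P1` are `< d'`
  have hT : ∀ y ∈ P1.getD (K - 1) [], y < d' := by
    intro y hy
    rcases S.content (K - 1) (by omega) y hy with hc | hc
    · exact key3 (K - 1) le_rfl y hc
    · rw [hc]
      exact key1 (K - 1) (by omega)
  -- all entries of `P1` are `≤ d'`
  have keyAll : ∀ r, ∀ y ∈ P1.getD r [], y ≤ d' := by
    intro r y hy
    by_cases hrK : r < K
    · rcases S.content r hrK y hy with hc | hc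
      · have := h.le_d r y hc
        omega
      · rw [hc]
        exact le_of_lt (key1 r hrK)
    · rw [getD_eq_of_drop_eq S.drop_eq (by omega)] at hy
      have := h.le_d r y hy
      omega
  have hKlen : K - 1 < P1.length := by
    have := S.len
    omega
  have hTmem : P1.getD (K - 1) [] ∈ P1 := by
    rw [List.getD_eq_getElem _ _ hKlen]
    exact List.getElem_mem hKlen
  have hps : pstep P (x', b', c', d') =
      P1.set (K - 1) (P1.getD (K - 1) [] ++ [d']) := by
    unfold pstep
    rw [← hP1, ← hjs', ← hK, modifyRow_eq_set _ _ _ hKlen]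
  rw [hps]
  set T := P1.getD (K - 1) [] with hTdef
  have hgetD : ∀ r, (P1.set (K - 1) (T ++ [d'])).getD r [] =
      if K - 1 = r then T ++ [d'] else P1.getD r [] := fun r => getD_set_rows _ _ _ hKlen r
  have hpv_eq : ∀ r < K, pv (P1.set (K - 1) (T ++ [d'])) js' r = pv P1 js' r := by
    intro r hr
    unfold pv
    rw [hgetD r]
    split_ifs with hcase
    · have hidx : js'.getD r 0 - 1 < T.length := by
        rw [hTdef, hcase]
        exact (S.path r hr).2.1
      rw [getD_append_left hidx, hTdef, hcase]
    · rfl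
  constructor
  · -- strict
    intro row hrow
    rcases List.mem_or_eq_of_mem_set hrow with hm | hm
    · exact S.strict row hm
    · rw [hm]
      exact sorted_append_singleton (S.strict T hTmem) hT
  · -- le_d
    intro r y hy
    rw [hgetD r] at hy
    split_ifs at hy with hcase
    · rcases List.mem_append.1 hy with hm | hm
      · exact le_of_lt (hT y hm)
      · simp only [List.mem_singleton] at hm
        omega
    · exact keyAll r y hy
  · exact S.ne
  · rw [List.length_set]
    exact S.len
  · -- path
    intro r hr
    obtain ⟨a1, a2, a3, a4⟩ := S.path r hr
    refine ⟨a1, ?_, ?_, ?_, ?_⟩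
    · rw [hgetD r]
      split_ifs with hcase
      · rw [← hcase] at a2 ⊢
        rw [← hTdef] at a2
        simp only [List.length_append, List.length_singleton]
        omega
      · exact a2
    · rw [hpv_eq r hr]; exact a3
    · rw [hpv_eq r hr]; exact a4
    · rw [hpv_eq r hr]; exact key1 r hr
  · -- mono
    intro r hr
    rw [hpv_eq r (by omega), hpv_eq (r+1) hr]
    exact (S.bump r hr).1
  · -- below
    intro r hr y hy
    rw [hgetD r, if_neg (by omega)] at hy
    rw [getD_eq_of_drop_eq S.drop_eq (by omega)] at hy
    exact key3 r (by omega) y hy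

theorem indBase {x b c d : ℕ} (h1 : x < b) (h2 : x < d) :
    InvP (pstep [] (x, b, c, d)) x b d (insertP b [] x).2 := by
  have hp : pstep [] (x, b, c, d) = [[x, d]] := by
    simp [pstep, insertP_nil, modifyRow]
  rw [hp, insertP_nil]
  constructor
  · intro row hrow
    simp only [List.mem_singleton] at hrow
    subst hrow
    simp only [List.pairwise_cons, List.mem_singleton, List.mem_cons]
    refine ⟨?_, by simp⟩
    intro y hy
    rcases hy with rfl | hy
    · exact h2
    · simp at hy
  · intro r y hy
    match r with
    | 0 =>
        simp only [List.getD_cons_zero, List.mem_cons, List.mem_singleton] at hy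
        rcases hy with rfl | rfl | hy
        · omega
        · exact le_rfl
        · simp at hy
    | r + 1 => simp at hy
  · simp
  · simp
  · intro r hr
    simp only [List.length_singleton] at hr
    interval_cases r
    refine ⟨by simp, by simp, by simp [pv], by simpa [pv] using h1, by simpa [pv] using h2⟩
  · intro r hr
    simp at hr
  · intro r hr y hy
    simp only [List.length_singleton] at hr
    match r, hr with
    | r + 1, _ => simp at hy

/-- The relation between consecutive quadruples extracted from a negative
skew-symmetric lexicographic pair of arrays. -/
def Rq (q q' : ℕ × ℕ × ℕ × ℕ) : Prop :=
  q.2.2.2 ≤ q'.2.2.2 ∧ (q.2.2.2 = q'.2.2.2 → q.2.1 = q'.2.1 ∧ q'.1 ≤ q.1)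

theorem fold_inv (qs : List (ℕ × ℕ × ℕ × ℕ)) : ∀ (q : ℕ × ℕ × ℕ × ℕ)
    (P : List (List ℕ)) (js : List ℕ),
    (∀ p ∈ qs, p.1 < p.2.1 ∧ p.1 < p.2.2.2) →
    List.Chain' Rq (q :: qs) →
    InvP P q.1 q.2.1 q.2.2.2 js →
    ∀ row ∈ List.foldl pstep P qs, row.Pairwise (· < ·) := by
  induction qs with
  | nil =>
      intro q P js _ _ hinv
      simpa using hinv.strict
  | cons q' qs' ih =>
      intro q P js hall hch hinv
      have hR : Rq q q' := (List.isChain_cons_cons.1 hch).1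
      have hq' := hall q' (by simp)
      have hinv' : InvP (pstep P q') q'.1 q'.2.1 q'.2.2.2 (insertP q'.2.1 P q'.1).2 :=
        indStep hinv hq'.1 hq'.2 hR.1 hR.2
      exact ih q' (pstep P q') _ (fun p hp => hall p (by simp [hp]))
        (List.isChain_cons_cons.1 hch).2 hinv'

lemma getD_reverse' {l : List ℕ} {k : ℕ} (h : k < l.length) :
    l.reverse.getD k 0 = l.getD (l.length - 1 - k) 0 := by
  rw [List.getD_eq_getElem _ _ (by simpa using h), List.getElem_reverse,
    List.getD_eq_getElem _ _ (by omega)]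

lemma quads_length (π : ArrayPair) (h : π.eqLen) : π.quads.length = π.t := by
  obtain ⟨ha, hc, hd⟩ := h
  have hb : π.b.length = π.t := rfl
  simp only [ArrayPair.quads, List.length_zip, List.length_reverse, ha, hb, hc, hd]
  omega

lemma quads_getElem (π : ArrayPair) (h : π.eqLen) (j : ℕ) (hj : j < π.quads.length) :
    π.quads[j] = (π.a.getD j 0, π.b.getD j 0, π.c.reverse.getD j 0,
      π.d.reverse.getD j 0) := by
  obtain ⟨ha, hc, hd⟩ := h
  have hjt : j < π.t := by rw [quads_length π ⟨ha, hc, hd⟩] at hj; exact hj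
  have hb : π.b.length = π.t := rfl
  simp only [ArrayPair.quads, List.getElem_zip]
  rw [List.getD_eq_getElem _ _ (by omega), List.getD_eq_getElem _ _ (by omega),
    List.getD_eq_getElem _ _ (by simp only [List.length_reverse]; omega),
    List.getD_eq_getElem _ _ (by simp only [List.length_reverse]; omega)]

lemma mem_entryDual_db (π : ArrayPair) (h : π.eqLen) {k : ℕ} (hk : k < π.t) :
    (π.d.getD k 0, π.b.getD (π.t - 1 - k) 0) ∈ π.entryDual := by
  obtain ⟨ha, hc, hd⟩ := h
  have hb : π.b.length = π.t := rfl
  have hzl : k < (π.d.zip π.b.reverse).length := by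
    simp only [List.length_zip, List.length_reverse, hd, hb]
    omega
  have he : (π.d.zip π.b.reverse)[k] = (π.d.getD k 0, π.b.getD (π.t - 1 - k) 0) := by
    rw [List.getElem_zip]
    have h1 : π.d.getD k 0 = π.d[k]'(by omega) := List.getD_eq_getElem _ _ (by omega)
    have h2 : π.b.reverse.getD k 0 = π.b.getD (π.t - 1 - k) 0 := by
      rw [getD_reverse' (by omega), hb]
    rw [h1] at *
    rw [← h2, List.getD_eq_getElem _ _ (by simp only [List.length_reverse]; omega)]
  have hmem := List.getElem_mem hzl
  rw [he] at hmem
  unfold ArrayPair.entryDual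
  simp only [List.mem_append]
  exact Or.inr hmem

lemma quads_forall (π : ArrayPair) (hlex : π.SkewSymmLex) (hneg : π.Negative) :
    ∀ p ∈ π.quads, p.1 < p.2.1 ∧ p.1 < p.2.2.2 := by
  intro p hp
  obtain ⟨j, hj, rfl⟩ := List.mem_iff_getElem.1 hp
  obtain ⟨ha, hc, hd⟩ := hlex.1
  have hb : π.b.length = π.t := rfl
  have hjt : j < π.t := by rw [quads_length π hlex.1] at hj; exact hj
  rw [quads_getElem π hlex.1 j hj]
  constructor
  · have hzl : j < (π.a.zip π.b).length := by
      simp only [List.length_zip, ha, hb]; omega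
    have hmem := List.getElem_mem hzl
    rw [List.getElem_zip] at hmem
    have := hneg _ hmem
    rw [List.getD_eq_getElem _ _ (show j < π.a.length by omega),
      List.getD_eq_getElem _ _ (show j < π.b.length by omega)]
    exact this
  · have hzl : j < (π.a.zip π.d.reverse).length := by
      simp only [List.length_zip, List.length_reverse, ha, hd]; omega
    have hmem := List.getElem_mem hzl
    rw [List.getElem_zip] at hmem
    have := hlex.2.2.2.2.1 _ hmem
    rw [List.getD_eq_getElem _ _ (show j < π.a.length by omega),
      List.getD_eq_getElem _ _
        (show j < π.d.reverse.length by simp only [List.length_reverse]; omega)]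
    exact this

lemma quads_chain (π : ArrayPair) (hlex : π.SkewSymmLex) : List.Chain' Rq π.quads := by
  have hEq := hlex.1
  obtain ⟨ha, hc, hd⟩ := hlex.1
  have hb : π.b.length = π.t := rfl
  have hba := hlex.2.2.1
  have hdc := hlex.2.2.2.1
  have hdual := hlex.2.2.2.2.2.2.1
  rw [show List.Chain' Rq π.quads ↔ _ from List.isChain_iff_getElem]
  intro i hi
  have hql := quads_length π hEq
  have hit : i + 1 < π.t := by omega
  rw [quads_getElem π hEq i (by omega),
    quads_getElem π hEq (i+1) (by omega)]
  have hdrev : ∀ j, j < π.t → π.d.reverse.getD j 0 = π.d.getD (π.t - 1 - j) 0 := by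
    intro j hj
    rw [getD_reverse' (by omega), hd]
  have harith : π.t - 1 - (i + 1) = π.t - 2 - i := by omega
  have hdle : π.d.getD (π.t - 1 - i) 0 ≤ π.d.getD (π.t - 2 - i) 0 := by
    have hlt : (π.t - 2 - i) + 1 < π.d.length := by omega
    have := (hdc (π.t - 2 - i) hlt).1
    have hk1 : (π.t - 2 - i) + 1 = π.t - 1 - i := by omega
    rwa [hk1] at this
  constructor
  · show π.d.reverse.getD i 0 ≤ π.d.reverse.getD (i+1) 0
    rw [hdrev i (by omega), hdrev (i+1) (by omega), harith]
    exact hdle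
  · intro heq
    have heq' : π.d.getD (π.t - 1 - i) 0 = π.d.getD (π.t - 2 - i) 0 := by
      have : π.d.reverse.getD i 0 = π.d.reverse.getD (i+1) 0 := heq
      rwa [hdrev i (by omega), hdrev (i+1) (by omega), harith] at this
    have hP1 := mem_entryDual_db π hEq (show π.t - 1 - i < π.t by omega)
    have hP2 := mem_entryDual_db π hEq (show π.t - 2 - i < π.t by omega)
    have hi1 : π.t - 1 - (π.t - 1 - i) = i := by omega
    have hi2 : π.t - 1 - (π.t - 2 - i) = i + 1 := by omega
    rw [hi1] at hP1
    rw [hi2] at hP2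
    have hbeq : π.b.getD i 0 = π.b.getD (i+1) 0 := (hdual _ hP1 _ hP2).2.2 heq'
    refine ⟨hbeq, ?_⟩
    have := (hba i (by omega)).2 hbeq.symm
    exact this

end OBRSKPaper

open OBRSKPaper

/-- For a pair of negative skew-symmetric lexicographic arrays of degree 2t,
every intermediate notched tableau `P^(i)` (`1 ≤ i ≤ t`) produced by the OBRSK algorithm
is row strict. -/
theorem stmt0 (π : ArrayPair) (hlex : π.SkewSymmLex) (hneg : π.Negative)
    (i : ℕ) (hi1 : 1 ≤ i) (hi2 : i ≤ π.t) :
    ∀ row ∈ (stepState π i).1, row.Pairwise (· < ·) := by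
  have hql : π.quads.length = π.t := quads_length π hlex.1
  have hfold : ∀ (qs : List (ℕ × ℕ × ℕ × ℕ)) (s : List (List ℕ) × List (List ℕ)),
      (List.foldl obrskStep s qs).1 = List.foldl pstep s.1 qs := by
    intro qs
    induction qs with
    | nil => intro s; rfl
    | cons q qs ihq =>
        intro s
        rw [List.foldl_cons, List.foldl_cons, ihq, obrskStep_fst]
  have hne : π.quads ≠ [] := by
    intro hcon
    rw [hcon] at hql
    simp only [List.length_nil] at hql
    omega
  obtain ⟨q0, qrest, hq⟩ := List.exists_cons_of_ne_nil hne
  obtain ⟨i', rfl⟩ : ∃ i', i = i' + 1 := ⟨i - 1, by omega⟩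
  have htake : π.quads.take (i' + 1) = q0 :: qrest.take i' := by
    rw [hq, List.take_succ_cons]
  have hstep : (stepState π (i' + 1)).1 =
      List.foldl pstep (pstep [] q0) (qrest.take i') := by
    unfold stepState
    rw [htake, hfold]
    rfl
  rw [hstep]
  have hq0 : q0 ∈ π.quads := by rw [hq]; exact List.mem_cons_self
  have h0 := quads_forall π hlex hneg q0 hq0
  have hbase : InvP (pstep [] q0) q0.1 q0.2.1 q0.2.2.2 (insertP q0.2.1 [] q0.1).2 :=
    indBase h0.1 h0.2
  apply fold_inv (qrest.take i') q0 (pstep [] q0) (insertP q0.2.1 [] q0.1).2 ?_ ?_ hbase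
  · intro p hp
    refine quads_forall π hlex hneg p ?_
    rw [hq]
    exact List.mem_cons_of_mem _ (List.take_subset _ _ hp)
  · exact (quads_chain π hlex).prefix (htake ▸ List.take_prefix (i' + 1) π.quads)
end

section
/- For every nonvanishing skew-symmetric notched bitableau (P,Q), the notched bitableau ι(P,Q) is itself a nonvanishing skew-symmetric notched bitableau; the map ι is an involution, i.e. ι(ι(P,Q)) = (P,Q); and ι maps negative skew-symmetric notched bitableaux to positive ones and positive ones to negative ones, hence gives a bijective pairing between the set of negative and the set of positive skew-symmetric notched bitableaux. -/
open OBRSKPaper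

section IotaAux
open OBRSKPaper

private lemma getD_rev {α} (l : List α) (d : α) (i : ℕ) (h : i < l.length) :
    l.reverse.getD i d = l.getD (l.length - 1 - i) d := by
  rw [List.getD_eq_getElem _ _ (by simpa using h),
      List.getD_eq_getElem _ _ (by omega), List.getElem_reverse]

private lemma cntLE_nil (z : ℕ) : cntLE [] z = 0 := rfl

private lemma diffLE_symm {A B A' B' : List ℕ} (h : diffLE A B A' B') :
    diffLE B' A' B A := by
  intro z; have := h z; linarith

private lemma diffLE_nil_iff (A B : List ℕ) : diffLE A B [] [] ↔ diffLE [] [] B A := by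
  constructor <;> intro h z <;> have := h z <;>
    simp only [cntLE_nil] at this ⊢ <;> linarith

private lemma diffLT_nil_iff (A B : List ℕ) : diffLT A B [] [] ↔ diffLT [] [] B A := by
  unfold diffLT
  rw [diffLE_nil_iff A B, ← diffLE_nil_iff B A]

private lemma length_PQ {B : Bitab} (h : B.SameShape) : B.P.length = B.Q.length := by
  have := congrArg List.length h; simpa using this

private lemma mem_zip_swap {α β} {l1 : List α} {l2 : List β} {x : α} {y : β} :
    (x, y) ∈ l1.zip l2 ↔ (y, x) ∈ l2.zip l1 := by
  constructor <;> intro h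
  · have := List.mem_map_of_mem (f := Prod.swap) h
    rwa [List.zip_swap] at this
  · have := List.mem_map_of_mem (f := Prod.swap) h
    rwa [List.zip_swap] at this

private lemma zip_rev {α β} (l1 : List α) (l2 : List β) (h : l1.length = l2.length) :
    l1.reverse.zip l2.reverse = (l1.zip l2).reverse := by
  simpa [List.zip] using (List.reverse_zipWith (f := Prod.mk) (l := l1) (l' := l2) h).symm

private lemma mem_entryDual_iota {B : Bitab} (hlen : B.P.length = B.Q.length)
    (p : ℕ × ℕ) : p ∈ (iota B).entryDual ↔ p ∈ B.entryDual := by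
  have hz : B.Q.reverse.zip B.P.reverse = (B.Q.zip B.P).reverse :=
    zip_rev _ _ hlen.symm
  simp only [Bitab.entryDual, iota, List.mem_append, List.mem_flatten, List.mem_map, hz,
    List.mem_reverse]
  constructor
  · rintro (⟨l, ⟨pq, hpq, rfl⟩, hp⟩ | ⟨l, ⟨pq, hpq, rfl⟩, hp⟩)
    · right
      refine ⟨_, ⟨(pq.2, pq.1), ?_, rfl⟩, hp⟩
      exact mem_zip_swap.mp hpq
    · left
      refine ⟨_, ⟨(pq.2, pq.1), ?_, rfl⟩, hp⟩
      exact mem_zip_swap.mp hpq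
  · rintro (⟨l, ⟨pq, hpq, rfl⟩, hp⟩ | ⟨l, ⟨pq, hpq, rfl⟩, hp⟩)
    · right
      refine ⟨_, ⟨(pq.2, pq.1), ?_, rfl⟩, hp⟩
      exact mem_zip_swap.mp hpq
    · left
      refine ⟨_, ⟨(pq.2, pq.1), ?_, rfl⟩, hp⟩
      exact mem_zip_swap.mp hpq

private lemma semistandard_iota {B : Bitab} (h : B.Semistandard) :
    (iota B).Semistandard := by
  obtain ⟨hs, hrs, hep, hle⟩ := h
  have hlen : B.P.length = B.Q.length := length_PQ hs
  refine ⟨?_, ⟨?_, ?_⟩, ⟨?_, ?_⟩, ?_⟩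
  · show (B.Q.reverse).map List.length = (B.P.reverse).map List.length
    rw [List.map_reverse, List.map_reverse, hs]
  · exact fun r hr => hrs.2 r (List.mem_reverse.mp hr)
  · exact fun r hr => hrs.1 r (List.mem_reverse.mp hr)
  · exact fun r hr => hep.2 r (List.mem_reverse.mp hr)
  · exact fun r hr => hep.1 r (List.mem_reverse.mp hr)
  · intro i hi
    have hi' : i + 1 < B.Q.length := by
      simpa [iota] using hi
    show diffLE (B.Q.reverse.getD i []) (B.P.reverse.getD i [])
      (B.Q.reverse.getD (i+1) []) (B.P.reverse.getD (i+1) [])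
    rw [getD_rev _ _ _ (by omega), getD_rev _ _ _ (by omega),
        getD_rev _ _ _ (by omega), getD_rev _ _ _ (by omega), hlen]
    have e1 : B.Q.length - 1 - i = (B.Q.length - 1 - (i+1)) + 1 := by omega
    rw [e1]
    have key := hle (B.Q.length - 1 - (i+1)) (by omega)
    exact diffLE_symm key

private lemma skewSymm_iota {B : Bitab} (h : B.SkewSymm) : (iota B).SkewSymm := by
  obtain ⟨hsem, hev, hdu⟩ := h
  have hlen : B.P.length = B.Q.length := length_PQ hsem.1
  refine ⟨semistandard_iota hsem, ?_, ?_⟩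
  · intro r hr
    have hr' : r ∈ B.Q := List.mem_reverse.mp hr
    have hmem : r.length ∈ B.Q.map List.length := List.mem_map_of_mem hr'
    rw [← hsem.1] at hmem
    obtain ⟨r', hr'', he'⟩ := List.mem_map.mp hmem
    exact he' ▸ hev r' hr''
  · intro p hp q hq
    exact hdu p ((mem_entryDual_iota hlen p).mp hp) q ((mem_entryDual_iota hlen q).mp hq)

private lemma nonvanishing_iota {B : Bitab} (h : B.Nonvanishing) :
    (iota B).Nonvanishing := by
  obtain ⟨hsem, hnv⟩ := h
  have hlen : B.P.length = B.Q.length := length_PQ hsem.1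
  refine ⟨semistandard_iota hsem, ?_⟩
  intro i hi
  have hi' : i < B.Q.length := by simpa [iota] using hi
  show diffLT (B.Q.reverse.getD i []) (B.P.reverse.getD i []) [] [] ∨
    diffLT [] [] (B.Q.reverse.getD i []) (B.P.reverse.getD i [])
  rw [getD_rev _ _ _ (by omega), getD_rev _ _ _ (by omega), hlen]
  rcases hnv (B.Q.length - 1 - i) (by omega) with h1 | h1
  · exact Or.inr ((diffLT_nil_iff _ _).mp h1)
  · exact Or.inl ((diffLT_nil_iff _ _).mpr h1)

private lemma neg_iota_pos {B : Bitab} (hn : B.Negative) : (iota B).Positive := by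
  refine ⟨semistandard_iota hn.1, ?_⟩
  intro hne
  have hlen : B.P.length = B.Q.length := length_PQ hn.1.1
  have hq : B.Q.length ≠ 0 := by
    intro h0
    exact hne (by simpa [iota, List.reverse_eq_nil_iff] using List.length_eq_zero_iff.mp h0)
  show diffLT [] [] (B.Q.reverse.getD 0 []) (B.P.reverse.getD 0 [])
  rw [getD_rev _ _ _ (by omega), getD_rev _ _ _ (by omega), hlen]
  have key := hn.2 (B.P.length - 1) (by omega)
  rw [hlen] at key
  simpa using (diffLT_nil_iff _ _).mp key

private lemma pos_iota_neg {B : Bitab} (hp : B.Positive) : (iota B).Negative := by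
  refine ⟨semistandard_iota hp.1, ?_⟩
  intro i hi
  have hlen : B.P.length = B.Q.length := length_PQ hp.1.1
  have hi' : B.Q.length = i + 1 := by simpa [iota] using hi
  show diffLT (B.Q.reverse.getD i []) (B.P.reverse.getD i []) [] []
  rw [getD_rev _ _ _ (by omega), getD_rev _ _ _ (by omega), hlen]
  have e : B.Q.length - 1 - i = 0 := by omega
  rw [e]
  have key := hp.2 (by intro h0; rw [h0] at hlen; simp at hlen; omega)
  exact (diffLT_nil_iff _ _).mpr key

private lemma iota_invol (B : Bitab) : iota (iota B) = B := by
  cases B; simp [iota]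

end IotaAux

/-- `ι` maps nonvanishing skew-symmetric notched bitableaux to nonvanishing
skew-symmetric notched bitableaux, is an involution, maps negative ones to positive ones
and vice versa, and gives a bijective pairing between the sets of negative and positive
skew-symmetric notched bitableaux. -/
theorem stmt4 :
    (∀ B : Bitab, B.SkewSymm → B.Nonvanishing →
      (iota B).SkewSymm ∧ (iota B).Nonvanishing) ∧
    (∀ B : Bitab, iota (iota B) = B) ∧
    (∀ B : Bitab, B.SkewSymm → B.Negative → (iota B).Positive) ∧
    (∀ B : Bitab, B.SkewSymm → B.Positive → (iota B).Negative) ∧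
    Set.BijOn iota {B : Bitab | B.SkewSymm ∧ B.Negative}
      {B : Bitab | B.SkewSymm ∧ B.Positive} := by
  refine ⟨fun B hs hn => ⟨skewSymm_iota hs, nonvanishing_iota hn⟩, iota_invol,
    fun B _ hn => neg_iota_pos hn, fun B _ hp => pos_iota_neg hp, ?_, ?_, ?_⟩
  · intro B hB
    exact ⟨skewSymm_iota hB.1, neg_iota_pos hB.2⟩
  · intro B _ B' _ h
    rw [← iota_invol B, h, iota_invol]
  · intro B' hB'
    exact ⟨iota B', ⟨skewSymm_iota hB'.1, pos_iota_neg hB'.2⟩, iota_invol B'⟩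
end

section
/- For every pair {π1,π2} of skew-symmetric lexicographic arrays, L({π1,π2}) := {l(π1), l^t(π2)} is again a pair of skew-symmetric lexicographic arrays; L is an involution; and L maps pairs of negative skew-symmetric lexicographic arrays to pairs of positive ones and vice versa, hence gives a bijective pairing between the set of all pairs of negative and the set of all pairs of positive skew-symmetric lexicographic arrays. -/
open OBRSKPaper

namespace SAux
open List OBRSKPaper

abbrev RL (x y : ℕ × ℕ) : Prop := lexSortKey x y = true

lemma RL_iff {x y : ℕ × ℕ} : RL x y ↔ (y.1 < x.1 ∨ (x.1 = y.1 ∧ y.2 ≤ x.2)) := by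
  simp [RL, lexSortKey]

lemma lexSortKey_trans : ∀ a b c : ℕ × ℕ, lexSortKey a b = true → lexSortKey b c = true →
    lexSortKey a c = true := by
  intro a b c h1 h2
  simp only [lexSortKey, decide_eq_true_eq] at h1 h2 ⊢
  omega

lemma lexSortKey_total : ∀ a b : ℕ × ℕ, (lexSortKey a b || lexSortKey b a) = true := by
  intro a b
  simp only [lexSortKey, Bool.or_eq_true, decide_eq_true_eq]
  omega

instance : IsTrans (ℕ × ℕ) RL := ⟨fun a b c h1 h2 => lexSortKey_trans a b c h1 h2⟩

instance : IsAntisymm (ℕ × ℕ) RL := ⟨by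
  intro a b h1 h2
  obtain ⟨a1, a2⟩ := a
  obtain ⟨b1, b2⟩ := b
  simp only [RL, lexSortKey, decide_eq_true_eq] at h1 h2
  simp only [Prod.mk.injEq]
  omega⟩

lemma sorted_ms (l : List (ℕ × ℕ)) : List.Pairwise RL (l.mergeSort lexSortKey) :=
  pairwise_mergeSort lexSortKey_trans lexSortKey_total l

lemma mergeSort_eq {l m : List (ℕ × ℕ)} (hp : l ~ m) (hm : List.Pairwise RL m) :
    l.mergeSort lexSortKey = m :=
  Perm.eq_of_pairwise (fun a b _ _ h1 h2 => by
      obtain ⟨a1, a2⟩ := a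
      obtain ⟨b1, b2⟩ := b
      simp only [RL, lexSortKey, decide_eq_true_eq] at h1 h2
      simp only [Prod.mk.injEq]
      omega) (sorted_ms l) hm ((mergeSort_perm l lexSortKey).trans hp)

lemma getElem_idx {α : Type*} {l : List α} {i j : ℕ} (hij : i = j) (hj : j < l.length) :
    l[i]'(hij ▸ hj) = l[j] := by subst hij; rfl

lemma mem_zip_iff' {u v : List ℕ} (h : v.length = u.length) {p : ℕ × ℕ} :
    p ∈ u.zip v ↔ ∃ i < u.length, p = (u.getD i 0, v.getD i 0) := by
  rw [mem_iff_getElem]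
  constructor
  · rintro ⟨n, hn, rfl⟩
    rw [length_zip] at hn
    refine ⟨n, by omega, ?_⟩
    rw [getElem_zip, getD_eq_getElem _ _ (by omega), getD_eq_getElem _ _ (by omega)]
  · rintro ⟨i, hi, rfl⟩
    refine ⟨i, by rw [length_zip]; omega, ?_⟩
    rw [getElem_zip, getD_eq_getElem _ _ (by omega), getD_eq_getElem _ _ (by omega)]

lemma mem_zip_rev_iff' {u v : List ℕ} (h : v.length = u.length) {p : ℕ × ℕ} :
    p ∈ u.zip v.reverse ↔ ∃ i < u.length, p = (u.getD i 0, v.getD (u.length - 1 - i) 0) := by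
  rw [mem_iff_getElem]
  constructor
  · rintro ⟨n, hn, rfl⟩
    rw [length_zip, length_reverse] at hn
    refine ⟨n, by omega, ?_⟩
    rw [getElem_zip, getElem_reverse, getD_eq_getElem _ _ (by omega),
      getD_eq_getElem _ _ (by omega)]
    simp only [Prod.mk.injEq]
    exact ⟨trivial, getElem_idx (by omega) (by omega)⟩
  · rintro ⟨i, hi, rfl⟩
    refine ⟨i, by rw [length_zip, length_reverse]; omega, ?_⟩
    rw [getElem_zip, getElem_reverse, getD_eq_getElem _ _ (by omega),
      getD_eq_getElem _ _ (by omega)]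
    simp only [Prod.mk.injEq]
    exact ⟨trivial, getElem_idx (by omega) (by omega)⟩


open Classical in
noncomputable def dualF (π : ArrayPair) (x : ℕ) : ℕ :=
  if h : ∃ y, (x, y) ∈ π.entryDual then h.choose else 0

lemma dualF_spec {π : ArrayPair} (hED : DualityProp π.entryDual) {x y : ℕ}
    (hxy : (x, y) ∈ π.entryDual) : dualF π x = y := by
  have hex : ∃ y, (x, y) ∈ π.entryDual := ⟨y, hxy⟩
  unfold dualF
  rw [dif_pos hex]
  exact (hED _ hex.choose_spec _ hxy).2.2 rfl

lemma dualityProp_mono {l l' : List (ℕ × ℕ)} (h : DualityProp l) (hs : ∀ p ∈ l', p ∈ l) :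
    DualityProp l' := fun p hp q hq => h p (hs p hp) q (hs q hq)

lemma dual_mem_a {π : ArrayPair} (h : π.eqLen) {i : ℕ} (hi : i < π.t) :
    (π.a.getD i 0, π.c.getD (π.t - 1 - i) 0) ∈ π.entryDual := by
  obtain ⟨la, lc, ld⟩ := h
  have hm : (π.a.getD i 0, π.c.getD (π.a.length - 1 - i) 0) ∈ π.a.zip π.c.reverse :=
    (mem_zip_rev_iff' (by omega)).mpr ⟨i, by omega, rfl⟩
  rw [la] at hm
  unfold ArrayPair.entryDual
  exact mem_append_left _ (mem_append_left _ (mem_append_left _ hm))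

lemma dual_mem_b {π : ArrayPair} (h : π.eqLen) {i : ℕ} (hi : i < π.t) :
    (π.b.getD i 0, π.d.getD (π.t - 1 - i) 0) ∈ π.entryDual := by
  obtain ⟨la, lc, ld⟩ := h
  have lb : π.b.length = π.t := rfl
  have hm : (π.b.getD i 0, π.d.getD (π.b.length - 1 - i) 0) ∈ π.b.zip π.d.reverse :=
    (mem_zip_rev_iff' (by omega)).mpr ⟨i, by omega, rfl⟩
  rw [lb] at hm
  unfold ArrayPair.entryDual
  exact mem_append_left _ (mem_append_left _ (mem_append_right _ hm))

lemma ED_symm {π : ArrayPair} (h : π.eqLen) {x y : ℕ}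
    (hxy : (x, y) ∈ π.entryDual) : (y, x) ∈ π.entryDual := by
  obtain ⟨la, lc, ld⟩ := h
  have lb : π.b.length = π.t := rfl
  unfold ArrayPair.entryDual at hxy ⊢
  simp only [mem_append] at hxy ⊢
  rcases hxy with ((h1 | h2) | h3) | h4
  · rw [mem_zip_rev_iff' (by omega)] at h1
    obtain ⟨i, hi, he⟩ := h1
    rw [Prod.ext_iff] at he
    obtain ⟨hx, hy⟩ := he
    subst hx; subst hy
    left; right
    rw [mem_zip_rev_iff' (by omega)]
    refine ⟨π.a.length - 1 - i, by omega, ?_⟩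
    rw [show π.c.length - 1 - (π.a.length - 1 - i) = i from by omega]
  · rw [mem_zip_rev_iff' (by omega)] at h2
    obtain ⟨i, hi, he⟩ := h2
    rw [Prod.ext_iff] at he
    obtain ⟨hx, hy⟩ := he
    subst hx; subst hy
    right
    rw [mem_zip_rev_iff' (by omega)]
    refine ⟨π.b.length - 1 - i, by omega, ?_⟩
    rw [show π.d.length - 1 - (π.b.length - 1 - i) = i from by omega]
  · rw [mem_zip_rev_iff' (by omega)] at h3
    obtain ⟨i, hi, he⟩ := h3
    rw [Prod.ext_iff] at he
    obtain ⟨hx, hy⟩ := he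
    subst hx; subst hy
    left; left; left
    rw [mem_zip_rev_iff' (by omega)]
    refine ⟨π.c.length - 1 - i, by omega, ?_⟩
    rw [show π.a.length - 1 - (π.c.length - 1 - i) = i from by omega]
  · rw [mem_zip_rev_iff' (by omega)] at h4
    obtain ⟨i, hi, he⟩ := h4
    rw [Prod.ext_iff] at he
    obtain ⟨hx, hy⟩ := he
    subst hx; subst hy
    left; left; right
    rw [mem_zip_rev_iff' (by omega)]
    refine ⟨π.d.length - 1 - i, by omega, ?_⟩
    rw [show π.b.length - 1 - (π.d.length - 1 - i) = i from by omega]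

lemma pairwise_zip_of_lex {top bot : List ℕ} (hlen : bot.length = top.length)
    (h : LexTwoRow top bot) : List.Pairwise RL (top.zip bot) := by
  rw [← isChain_iff_pairwise, isChain_iff_getElem]
  intro i hi
  have hl : (top.zip bot).length = top.length := by rw [length_zip]; omega
  have hi1 : i + 1 < top.length := by omega
  obtain ⟨h1, h2⟩ := h i hi1
  have e1 : top.getD (i+1) 0 = top[i+1] := getD_eq_getElem _ _ hi1
  have e2 : top.getD i 0 = top[i]'(by omega) := getD_eq_getElem _ _ (by omega)
  have e3 : bot.getD (i+1) 0 = bot[i+1]'(by omega) := getD_eq_getElem _ _ (by omega)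
  have e4 : bot.getD i 0 = bot[i]'(by omega) := getD_eq_getElem _ _ (by omega)
  rw [e1, e2] at h1
  rw [e1, e2, e3, e4] at h2
  simp only [get_eq_getElem, getElem_zip, RL_iff]
  rcases eq_or_lt_of_le h1 with heq | hlt
  · exact Or.inr ⟨heq.symm, h2 heq⟩
  · exact Or.inl hlt

lemma lex_of_sorted {s : List (ℕ × ℕ)} (hs : List.Pairwise RL s) :
    LexTwoRow (s.map Prod.fst) (s.map Prod.snd) := by
  intro k hk
  rw [length_map] at hk
  have hk' : k < s.length := by omega
  have hrel : RL (s[k]'hk') (s[k+1]'hk) :=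
    pairwise_iff_getElem.mp hs k (k+1) hk' hk (by omega)
  rw [RL_iff] at hrel
  have e1 : (s.map Prod.fst).getD (k+1) 0 = (s[k+1]'hk).1 := by
    rw [getD_eq_getElem _ _ (by simpa using hk), getElem_map]
  have e2 : (s.map Prod.fst).getD k 0 = (s[k]'hk').1 := by
    rw [getD_eq_getElem _ _ (by simpa using hk'), getElem_map]
  have e3 : (s.map Prod.snd).getD (k+1) 0 = (s[k+1]'hk).2 := by
    rw [getD_eq_getElem _ _ (by simpa using hk), getElem_map]
  have e4 : (s.map Prod.snd).getD k 0 = (s[k]'hk').2 := by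
    rw [getD_eq_getElem _ _ (by simpa using hk'), getElem_map]
  rw [e1, e2, e3, e4]
  constructor
  · omega
  · intro hq; omega

lemma Lmap_eq (σ : ArrayPair) {m1 m2 : List (ℕ × ℕ)}
    (h1 : (σ.a.zip σ.b).mergeSort lexSortKey = m1)
    (h2 : (σ.c.zip σ.d).mergeSort lexSortKey = m2) :
    Lmap σ = ⟨m1.map Prod.snd, m1.map Prod.fst, m2.map Prod.snd, m2.map Prod.fst⟩ := by
  rw [← h1, ← h2]; rfl

set_option maxHeartbeats 2000000 in
lemma Lmap_skew (π : ArrayPair) (hπ : π.SkewSymmLex) : (Lmap π).SkewSymmLex := by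
  obtain ⟨⟨la, lc, ld⟩, hpos, hlex1, hlex2, had, hbc, hED, -⟩ := hπ
  have lb : π.b.length = π.t := rfl
  set s1 := (π.a.zip π.b).mergeSort lexSortKey with hs1
  set s2 := (π.c.zip π.d).mergeSort lexSortKey with hs2
  have hL : Lmap π = ⟨s1.map Prod.snd, s1.map Prod.fst, s2.map Prod.snd, s2.map Prod.fst⟩ :=
    rfl
  have ls1 : s1.length = π.t := by
    rw [hs1, (mergeSort_perm _ _).length_eq, length_zip]; omega
  have ls2 : s2.length = π.t := by
    rw [hs2, (mergeSort_perm _ _).length_eq, length_zip]; omega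
  have hsort1 : List.Pairwise RL s1 := by rw [hs1]; exact sorted_ms _
  have hsort2 : List.Pairwise RL s2 := by rw [hs2]; exact sorted_ms _
  have hmem : ∀ x ∈ s1, x ∈ π.a.zip π.b := by
    intro x hx
    rw [hs1] at hx
    exact (mergeSort_perm _ _).subset hx
  have hcolED : ∀ p ∈ π.a.zip π.b,
      (p.1, dualF π p.1) ∈ π.entryDual ∧ (p.2, dualF π p.2) ∈ π.entryDual := by
    intro p hp
    obtain ⟨i, hi, rfl⟩ := (mem_zip_iff' (show π.b.length = π.a.length by omega)).mp hp
    constructor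
    · dsimp only
      rw [dualF_spec hED (dual_mem_a ⟨la, lc, ld⟩ (show i < π.t by omega))]
      exact dual_mem_a ⟨la, lc, ld⟩ (by omega)
    · dsimp only
      rw [dualF_spec hED (dual_mem_b ⟨la, lc, ld⟩ (show i < π.t by omega))]
      exact dual_mem_b ⟨la, lc, ld⟩ (by omega)
  have hanti : ∀ p ∈ π.a.zip π.b, ∀ q ∈ π.a.zip π.b, RL p q →
      RL (dualF π q.1, dualF π q.2) (dualF π p.1, dualF π p.2) := by
    intro p hp q hq hpq
    obtain ⟨hp1, hp2⟩ := hcolED p hp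
    obtain ⟨hq1, hq2⟩ := hcolED q hq
    rw [RL_iff] at hpq ⊢
    rcases hpq with hlt | ⟨h1, h2⟩
    · exact Or.inl ((hED _ hq1 _ hp1).2.1 hlt)
    · exact Or.inr ⟨((hED _ hp1 _ hq1).2.2 h1).symm, (hED _ hq2 _ hp2).1 h2⟩
  have hCLr : (π.c.zip π.d).reverse
      = (π.a.zip π.b).map (fun p => (dualF π p.1, dualF π p.2)) := by
    apply ext_getElem
    · simp only [length_reverse, length_zip, length_map]; omega
    intro n h1 h2
    have hn : n < π.t := by
      simp only [length_reverse, length_zip] at h1; omega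
    rw [getElem_reverse, getElem_zip, getElem_map, getElem_zip]
    have da := dualF_spec hED (dual_mem_a ⟨la, lc, ld⟩ hn)
    have db := dualF_spec hED (dual_mem_b ⟨la, lc, ld⟩ hn)
    have ea : π.a.getD n 0 = π.a[n]'(by omega) := getD_eq_getElem _ _ (by omega)
    have eb : π.b.getD n 0 = π.b[n]'(by omega) := getD_eq_getElem _ _ (by omega)
    have ec : π.c.getD (π.t - 1 - n) 0 = π.c[π.t - 1 - n]'(by omega) :=
      getD_eq_getElem _ _ (by omega)
    have ed : π.d.getD (π.t - 1 - n) 0 = π.d[π.t - 1 - n]'(by omega) :=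
      getD_eq_getElem _ _ (by omega)
    have da' : dualF π (π.a[n]'(by omega)) = π.c[π.t - 1 - n]'(by omega) :=
      (congrArg (dualF π) ea.symm).trans (da.trans ec)
    have db' : dualF π (π.b[n]'(by omega)) = π.d[π.t - 1 - n]'(by omega) :=
      (congrArg (dualF π) eb.symm).trans (db.trans ed)
    dsimp only
    simp only [Prod.mk.injEq]
    constructor
    · exact (getElem_idx (show (π.c.zip π.d).length - 1 - n = π.t - 1 - n by
        simp only [length_zip]; omega) (by omega)).trans da'.symm
    · exact (getElem_idx (show (π.c.zip π.d).length - 1 - n = π.t - 1 - n by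
        simp only [length_zip]; omega) (by omega)).trans db'.symm
  have hstar : s2 = (s1.map (fun p => (dualF π p.1, dualF π p.2))).reverse := by
    rw [hs2]
    apply mergeSort_eq
    · have h0 : π.c.zip π.d
          = ((π.a.zip π.b).map (fun p => (dualF π p.1, dualF π p.2))).reverse := by
        rw [← hCLr, reverse_reverse]
      rw [h0]
      exact ((reverse_perm _).trans
        (Perm.map _ ((by rw [hs1]; exact mergeSort_perm _ _ : s1 ~ π.a.zip π.b)).symm)).trans
        (reverse_perm _).symm
    · rw [pairwise_reverse, pairwise_map]
      refine List.Pairwise.imp_of_mem ?_ hsort1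
      intro p q hp hq hpq
      exact hanti p (hmem p hp) q (hmem q hq) hpq
  have hs2snd : s2.map Prod.snd = (s1.map (fun p => dualF π p.2)).reverse := by
    rw [hstar, map_reverse, map_map]
    rfl
  have hs2fst : s2.map Prod.fst = (s1.map (fun p => dualF π p.1)).reverse := by
    rw [hstar, map_reverse, map_map]
    rfl
  rw [hL]
  unfold ArrayPair.SkewSymmLex ArrayPair.eqLen
  refine ⟨⟨?_, ?_, ?_⟩, ?_, ?_, ?_, ?_, ?_, ?_, ?_⟩
  · show (s1.map Prod.snd).length = (s1.map Prod.fst).length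
    simp
  · show (s2.map Prod.snd).length = (s1.map Prod.fst).length
    simp [ls1, ls2]
  · show (s2.map Prod.fst).length = (s1.map Prod.fst).length
    simp [ls1, ls2]
  · -- positivity
    have pna : s1.map Prod.snd ~ π.b := by
      rw [← map_snd_zip (l₁ := π.a) (l₂ := π.b) (by omega)]
      exact Perm.map _ (by rw [hs1]; exact mergeSort_perm _ _)
    have pnb : s1.map Prod.fst ~ π.a := by
      rw [← map_fst_zip (l₁ := π.a) (l₂ := π.b) (by omega)]
      exact Perm.map _ (by rw [hs1]; exact mergeSort_perm _ _)
    have pnc : s2.map Prod.snd ~ π.d := by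
      rw [← map_snd_zip (l₁ := π.c) (l₂ := π.d) (by omega)]
      exact Perm.map _ (by rw [hs2]; exact mergeSort_perm _ _)
    have pnd : s2.map Prod.fst ~ π.c := by
      rw [← map_fst_zip (l₁ := π.c) (l₂ := π.d) (by omega)]
      exact Perm.map _ (by rw [hs2]; exact mergeSort_perm _ _)
    show ∀ x ∈ (s1.map Prod.snd) ++ (s1.map Prod.fst) ++ (s2.map Prod.snd) ++
      (s2.map Prod.fst), 0 < x
    intro x hx
    simp only [mem_append] at hx
    apply hpos x
    simp only [mem_append]
    rcases hx with ((hh | hh) | hh) | hh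
    · exact Or.inl (Or.inl (Or.inr (pna.subset hh)))
    · exact Or.inl (Or.inl (Or.inl (pnb.subset hh)))
    · exact Or.inr (pnc.subset hh)
    · exact Or.inl (Or.inr (pnd.subset hh))
  · exact lex_of_sorted hsort1
  · exact lex_of_sorted hsort2
  · -- a' zip d'.reverse
    show ∀ p ∈ (s1.map Prod.snd).zip (s2.map Prod.fst).reverse, p.1 < p.2
    intro p hp
    rw [hs2fst, reverse_reverse, zip_map'] at hp
    obtain ⟨q, hq, rfl⟩ := mem_map.mp hp
    obtain ⟨i, hi, rfl⟩ :=
      (mem_zip_iff' (show π.b.length = π.a.length by omega)).mp (hmem q hq)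
    dsimp only
    rw [dualF_spec hED (dual_mem_a ⟨la, lc, ld⟩ (show i < π.t by omega))]
    have hm := hbc _ ((mem_zip_rev_iff'
      (show π.c.length = π.b.length by omega)).mpr ⟨i, by omega, rfl⟩)
    rw [lb] at hm
    exact hm
  · -- b' zip c'.reverse
    show ∀ p ∈ (s1.map Prod.fst).zip (s2.map Prod.snd).reverse, p.1 < p.2
    intro p hp
    rw [hs2snd, reverse_reverse, zip_map'] at hp
    obtain ⟨q, hq, rfl⟩ := mem_map.mp hp
    obtain ⟨i, hi, rfl⟩ :=
      (mem_zip_iff' (show π.b.length = π.a.length by omega)).mp (hmem q hq)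
    dsimp only
    rw [dualF_spec hED (dual_mem_b ⟨la, lc, ld⟩ (show i < π.t by omega))]
    have hm := had _ ((mem_zip_rev_iff'
      (show π.d.length = π.a.length by omega)).mpr ⟨i, by omega, rfl⟩)
    rw [la] at hm
    exact hm
  · -- duality
    refine dualityProp_mono hED ?_
    intro p hp
    unfold ArrayPair.entryDual at hp
    dsimp only at hp
    simp only [mem_append] at hp
    rcases hp with ((hh | hh) | hh) | hh
    · rw [hs2snd, reverse_reverse, zip_map'] at hh
      obtain ⟨q, hq, rfl⟩ := mem_map.mp hh
      exact (hcolED q (hmem q hq)).2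
    · rw [hs2fst, reverse_reverse, zip_map'] at hh
      obtain ⟨q, hq, rfl⟩ := mem_map.mp hh
      exact (hcolED q (hmem q hq)).1
    · rw [hs2snd, ← map_reverse, ← map_reverse, zip_map'] at hh
      obtain ⟨q, hq, rfl⟩ := mem_map.mp hh
      exact ED_symm ⟨la, lc, ld⟩ ((hcolED q (hmem q (mem_reverse.mp hq))).2)
    · rw [hs2fst, ← map_reverse, ← map_reverse, zip_map'] at hh
      obtain ⟨q, hq, rfl⟩ := mem_map.mp hh
      exact ED_symm ⟨la, lc, ld⟩ ((hcolED q (hmem q (mem_reverse.mp hq))).1)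
  · -- sign condition
    intro i hi
    simp only [ArrayPair.t, length_map] at hi
    have hii : i < s1.length := hi
    have hq : s1[i]'hii ∈ π.a.zip π.b := hmem _ (getElem_mem _)
    obtain ⟨hq1, hq2⟩ := hcolED _ hq
    show ((s1.map Prod.snd).getD i 0 < (s1.map Prod.fst).getD i 0 →
        (s2.map Prod.fst).getD ((s1.map Prod.fst).length - 1 - i) 0 <
          (s2.map Prod.snd).getD ((s1.map Prod.fst).length - 1 - i) 0) ∧
      ((s1.map Prod.fst).getD i 0 < (s1.map Prod.snd).getD i 0 →
        (s2.map Prod.snd).getD ((s1.map Prod.fst).length - 1 - i) 0 <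
          (s2.map Prod.fst).getD ((s1.map Prod.fst).length - 1 - i) 0)
    have e1 : (s1.map Prod.snd).getD i 0 = (s1[i]'hii).2 := by
      rw [getD_eq_getElem _ _ (by simpa using hii), getElem_map]
    have e2 : (s1.map Prod.fst).getD i 0 = (s1[i]'hii).1 := by
      rw [getD_eq_getElem _ _ (by simpa using hii), getElem_map]
    have e3 : (s2.map Prod.fst).getD ((s1.map Prod.fst).length - 1 - i) 0
        = dualF π (s1[i]'hii).1 := by
      rw [hs2fst, getD_eq_getElem _ _ (by simp only [length_reverse, length_map]; omega),
        getElem_reverse, getElem_map]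
      exact congrArg (fun r : ℕ × ℕ => dualF π r.1)
        (getElem_idx (by simp only [length_map]; omega) hii)
    have e4 : (s2.map Prod.snd).getD ((s1.map Prod.fst).length - 1 - i) 0
        = dualF π (s1[i]'hii).2 := by
      rw [hs2snd, getD_eq_getElem _ _ (by simp only [length_reverse, length_map]; omega),
        getElem_reverse, getElem_map]
      exact congrArg (fun r : ℕ × ℕ => dualF π r.2)
        (getElem_idx (by simp only [length_map]; omega) hii)
    rw [e1, e2, e3, e4]
    constructor
    · intro hlt
      exact (hED _ hq2 _ hq1).2.1 hlt
    · intro hlt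
      exact (hED _ hq1 _ hq2).2.1 hlt

lemma Lmap_invol (π : ArrayPair) (hπ : π.SkewSymmLex) : Lmap (Lmap π) = π := by
  obtain ⟨⟨la, lc, ld⟩, -, hlex1, hlex2, -, -, -, -⟩ := hπ
  have lb : π.b.length = π.t := rfl
  have hm1 : ((Lmap π).a.zip (Lmap π).b).mergeSort lexSortKey = π.b.zip π.a := by
    have e : (Lmap π).a.zip (Lmap π).b
        = ((π.a.zip π.b).mergeSort lexSortKey).map (fun q : ℕ × ℕ => (q.2, q.1)) := by
      show (((π.a.zip π.b).mergeSort lexSortKey).map Prod.snd).zip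
        (((π.a.zip π.b).mergeSort lexSortKey).map Prod.fst) = _
      rw [zip_map']
    rw [e]
    apply mergeSort_eq
    · have hsw : (π.a.zip π.b).map (fun q : ℕ × ℕ => (q.2, q.1)) = π.b.zip π.a :=
        zip_swap π.a π.b
      rw [← hsw]
      exact Perm.map _ (mergeSort_perm _ _)
    · exact pairwise_zip_of_lex (by omega) hlex1
  have hm2 : ((Lmap π).c.zip (Lmap π).d).mergeSort lexSortKey = π.d.zip π.c := by
    have e : (Lmap π).c.zip (Lmap π).d
        = ((π.c.zip π.d).mergeSort lexSortKey).map (fun q : ℕ × ℕ => (q.2, q.1)) := by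
      show (((π.c.zip π.d).mergeSort lexSortKey).map Prod.snd).zip
        (((π.c.zip π.d).mergeSort lexSortKey).map Prod.fst) = _
      rw [zip_map']
    rw [e]
    apply mergeSort_eq
    · have hsw : (π.c.zip π.d).map (fun q : ℕ × ℕ => (q.2, q.1)) = π.d.zip π.c :=
        zip_swap π.c π.d
      rw [← hsw]
      exact Perm.map _ (mergeSort_perm _ _)
    · exact pairwise_zip_of_lex (by omega) hlex2
  rw [Lmap_eq (Lmap π) hm1 hm2]
  rw [map_snd_zip (by omega), map_fst_zip (by omega),
    map_snd_zip (by omega), map_fst_zip (by omega)]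

lemma Lmap_negpos (π : ArrayPair) (h : π.Negative) : (Lmap π).Positive := by
  intro p hp
  have e : (Lmap π).a.zip (Lmap π).b
      = ((π.a.zip π.b).mergeSort lexSortKey).map (fun q : ℕ × ℕ => (q.2, q.1)) := by
    show (((π.a.zip π.b).mergeSort lexSortKey).map Prod.snd).zip
      (((π.a.zip π.b).mergeSort lexSortKey).map Prod.fst) = _
    rw [zip_map']
  rw [e] at hp
  obtain ⟨q, hq, rfl⟩ := mem_map.mp hp
  exact h q ((mergeSort_perm _ _).subset hq)

lemma Lmap_posneg (π : ArrayPair) (h : π.Positive) : (Lmap π).Negative := by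
  intro p hp
  have e : (Lmap π).a.zip (Lmap π).b
      = ((π.a.zip π.b).mergeSort lexSortKey).map (fun q : ℕ × ℕ => (q.2, q.1)) := by
    show (((π.a.zip π.b).mergeSort lexSortKey).map Prod.snd).zip
      (((π.a.zip π.b).mergeSort lexSortKey).map Prod.fst) = _
    rw [zip_map']
  rw [e] at hp
  obtain ⟨q, hq, rfl⟩ := mem_map.mp hp
  exact h q ((mergeSort_perm _ _).subset hq)

end SAux

/-- `L` maps pairs of skew-symmetric lexicographic arrays to pairs of
skew-symmetric lexicographic arrays, is an involution, maps pairs of negative ones to pairs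
of positive ones and vice versa, and gives a bijective pairing between the sets of pairs of
negative and of positive skew-symmetric lexicographic arrays. -/

theorem stmt5 :
    (∀ π : ArrayPair, π.SkewSymmLex → (Lmap π).SkewSymmLex) ∧
    (∀ π : ArrayPair, π.SkewSymmLex → Lmap (Lmap π) = π) ∧
    (∀ π : ArrayPair, π.SkewSymmLex → π.Negative → (Lmap π).Positive) ∧
    (∀ π : ArrayPair, π.SkewSymmLex → π.Positive → (Lmap π).Negative) ∧
    Set.BijOn Lmap {π : ArrayPair | π.SkewSymmLex ∧ π.Negative}
      {π : ArrayPair | π.SkewSymmLex ∧ π.Positive} := by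
  
  refine ⟨SAux.Lmap_skew, SAux.Lmap_invol,
    fun π h hn => SAux.Lmap_negpos π hn,
    fun π h hp => SAux.Lmap_posneg π hp, ?_, ?_, ?_⟩
  · intro π hπ
    exact ⟨SAux.Lmap_skew π hπ.1, SAux.Lmap_negpos π hπ.2⟩
  · intro π hπ σ hσ h
    rw [← SAux.Lmap_invol π hπ.1, h, SAux.Lmap_invol σ hσ.1]
  · intro π hπ
    exact ⟨Lmap π, ⟨SAux.Lmap_skew π hπ.1, SAux.Lmap_posneg π hπ.2⟩,
      SAux.Lmap_invol π hπ.1⟩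
end
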